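/- arXiv:2403.00989 — 5 statements merged into one kernel-verified Lean document; each statement's English description precedes it below -/
import Mathlib

section
/- For any probability measure P_{XY} on {-1,1}×{-1,1} with product extension P_{XY}^d, and any functions f, g: {-1,1}^d → ℝ, the expectation E[f(X^d) g(Y^d)] equals the sum over subsets S ⊆ [d] of f_S · g_S · ρ^{|S|}, where ρ is the Pearson correlation coefficient of (X,Y), f_S = E[f(X^d) φ_S(X^d)] with φ_S(x^d) = ∏_{i∈S} (x_i − μ_X)/σ_X, and g_S = E[g(Y^d) ψ_S(Y^d)] with ψ_S(y^d) = ∏_{i∈S} (y_i − μ_Y)/σ_Y. -/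
/-- The real value (±1) of a Boolean symbol. -/
def sgn (b : Bool) : ℝ := if b then 1 else -1

theorem keyLem (p : Bool × Bool → ℝ)
    (hp : ∑ z : Bool × Bool, p z = 1)
    (μX μY σX σY ρ : ℝ)
    (hμX : μX = ∑ z : Bool × Bool, p z * sgn z.1)
    (hμY : μY = ∑ z : Bool × Bool, p z * sgn z.2)
    (hσX : σX ^ 2 = ∑ z : Bool × Bool, p z * (sgn z.1 - μX) ^ 2) (hσXpos : 0 < σX)
    (hσY : σY ^ 2 = ∑ z : Bool × Bool, p z * (sgn z.2 - μY) ^ 2) (hσYpos : 0 < σY)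
    (hρ : ρ = (∑ z : Bool × Bool, p z * ((sgn z.1 - μX) * (sgn z.2 - μY))) / (σX * σY))
    (a b : Bool) :
    p (a, b) = (∑ c : Bool, p (a, c)) * (∑ c : Bool, p (c, b))
        + (∑ c : Bool, p (a, c)) * (∑ c : Bool, p (c, b))
          * (ρ * ((sgn a - μX) / σX * ((sgn b - μY) / σY))) := by
  have hσX0 : σX ≠ 0 := hσXpos.ne'
  have hσY0 : σY ≠ 0 := hσYpos.ne'
  simp only [Fintype.sum_prod_type, Fintype.sum_bool, sgn, if_true, if_false,
    mul_one, mul_neg_one, Bool.false_eq_true, if_false] at hp hμX hμY hσX hσY hρ ⊢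
  set A := p (true, true) with hA
  set B := p (true, false) with hB
  set C := p (false, true) with hC
  set E := p (false, false) with hE
  set T := A - B - C + E with hT
  clear_value A B C E T
  have hX2 : σX ^ 2 = 1 - μX ^ 2 := by linear_combination hσX + (1 + μX^2) * hp + 2 * μX * hμX
  have hY2 : σY ^ 2 = 1 - μY ^ 2 := by linear_combination hσY + (1 + μY^2) * hp + 2 * μY * hμY
  have h1X : (0:ℝ) < 1 - μX ^ 2 := hX2 ▸ (by positivity)
  have h1Y : (0:ℝ) < 1 - μY ^ 2 := hY2 ▸ (by positivity)
  have hρ' : ρ = (T - μX * μY) / (σX * σY) := by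
    rw [hρ, hT]
    congr 1
    linear_combination μX * hμY + μY * hμX + μX * μY * hp
  have hAv : A = (1 + μX + μY + T) / 4 := by rw [hT]; linarith
  have hBv : B = (1 + μX - μY - T) / 4 := by rw [hT]; linarith
  have hCv : C = (1 - μX + μY - T) / 4 := by rw [hT]; linarith
  have hEv : E = (1 - μX - μY + T) / 4 := by rw [hT]; linarith
  have hfac : ∀ u v : ℝ, ρ * ((u - μX) / σX * ((v - μY) / σY))
      = (T - μX * μY) * (u - μX) * (v - μY) / ((1 - μX ^ 2) * (1 - μY ^ 2)) := by
    intro u v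
    rw [hρ', ← hX2, ← hY2]
    rw [show σX ^ 2 * σY ^ 2 = (σX * σY) * (σX * σY) from by ring]
    field_simp
  cases a <;> cases b <;>
  · rw [hfac]; simp only [← hA, ← hB, ← hC, ← hE]; simp only [hAv, hBv, hCv, hEv]
    simp only [Bool.false_eq_true, eq_self_iff_true, if_false, if_true, ↓reduceIte]
    field_simp
    ring

/-- For a joint distribution on `{-1,1}²` (marginals with nonzero variance)
and its `d`-fold product, for any `f, g : {-1,1}^d → ℝ`,
`E[f(X^d) g(Y^d)] = ∑_{S ⊆ [d]} f_S g_S ρ^{|S|}` where `f_S, g_S` are the biased Fourier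
coefficients with respect to the marginals and `ρ` is the Pearson correlation of `(X,Y)`. -/
theorem stmt_2 (d : ℕ) (p : Bool × Bool → ℝ)
    (hp : ∑ z : Bool × Bool, p z = 1) (hpos : ∀ z, 0 ≤ p z)
    (μX μY σX σY ρ : ℝ)
    (hμX : μX = ∑ z : Bool × Bool, p z * sgn z.1)
    (hμY : μY = ∑ z : Bool × Bool, p z * sgn z.2)
    (hσX : σX ^ 2 = ∑ z : Bool × Bool, p z * (sgn z.1 - μX) ^ 2) (hσXpos : 0 < σX)
    (hσY : σY ^ 2 = ∑ z : Bool × Bool, p z * (sgn z.2 - μY) ^ 2) (hσYpos : 0 < σY)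
    (hρ : ρ = (∑ z : Bool × Bool, p z * ((sgn z.1 - μX) * (sgn z.2 - μY))) / (σX * σY))
    (f g : (Fin d → Bool) → ℝ) :
    ∑ x : Fin d → Bool, ∑ y : Fin d → Bool,
        (∏ i, p (x i, y i)) * (f x * g y)
      = ∑ S : Finset (Fin d),
          (∑ x : Fin d → Bool,
              (∏ i, (∑ c : Bool, p (x i, c))) * (f x * ∏ i ∈ S, (sgn (x i) - μX) / σX))
          * (∑ y : Fin d → Bool,
              (∏ i, (∑ c : Bool, p (c, y i))) * (g y * ∏ i ∈ S, (sgn (y i) - μY) / σY))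
          * ρ ^ S.card := by
  have main : ∀ x y : Fin d → Bool, (∏ i, p (x i, y i)) * (f x * g y)
      = ∑ S : Finset (Fin d),
          ((∏ i, (∑ c : Bool, p (x i, c))) * (f x * ∏ i ∈ S, (sgn (x i) - μX) / σX))
          * ((∏ i, (∑ c : Bool, p (c, y i))) * (g y * ∏ i ∈ S, (sgn (y i) - μY) / σY))
          * ρ ^ S.card := by
    intro x y
    have h1 : (∏ i, p (x i, y i)) =
        ∏ i : Fin d, (((∑ c : Bool, p (x i, c)) * (∑ c : Bool, p (c, y i)))
              * (ρ * ((sgn (x i) - μX) / σX * ((sgn (y i) - μY) / σY)))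
            + (∑ c : Bool, p (x i, c)) * (∑ c : Bool, p (c, y i))) :=
      Finset.prod_congr rfl fun i _ => by
        rw [keyLem p hp μX μY σX σY ρ hμX hμY hσX hσXpos hσY hσYpos hρ (x i) (y i)]
        ring
    rw [h1, Finset.prod_add, Finset.powerset_univ, Finset.sum_mul]
    refine Finset.sum_congr rfl fun S _ => ?_
    have hX := Finset.prod_sdiff (f := fun i => (∑ c : Bool, p (x i, c))) (Finset.subset_univ S)
    have hY := Finset.prod_sdiff (f := fun i => (∑ c : Bool, p (c, y i))) (Finset.subset_univ S)
    simp only [Finset.prod_mul_distrib, Finset.prod_const]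
    rw [← hX, ← hY]
    ring
  have expand : ∀ S : Finset (Fin d),
      (∑ x : Fin d → Bool,
          (∏ i, (∑ c : Bool, p (x i, c))) * (f x * ∏ i ∈ S, (sgn (x i) - μX) / σX))
      * (∑ y : Fin d → Bool,
          (∏ i, (∑ c : Bool, p (c, y i))) * (g y * ∏ i ∈ S, (sgn (y i) - μY) / σY))
      * ρ ^ S.card
      = ∑ x : Fin d → Bool, ∑ y : Fin d → Bool,
          ((∏ i, (∑ c : Bool, p (x i, c))) * (f x * ∏ i ∈ S, (sgn (x i) - μX) / σX))
          * ((∏ i, (∑ c : Bool, p (c, y i))) * (g y * ∏ i ∈ S, (sgn (y i) - μY) / σY))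
          * ρ ^ S.card := by
    intro S
    rw [Finset.sum_mul_sum, Finset.sum_mul]
    exact Finset.sum_congr rfl fun x _ => by rw [Finset.sum_mul]
  calc ∑ x : Fin d → Bool, ∑ y : Fin d → Bool, (∏ i, p (x i, y i)) * (f x * g y)
      = ∑ x : Fin d → Bool, ∑ y : Fin d → Bool, ∑ S : Finset (Fin d),
          ((∏ i, (∑ c : Bool, p (x i, c))) * (f x * ∏ i ∈ S, (sgn (x i) - μX) / σX))
          * ((∏ i, (∑ c : Bool, p (c, y i))) * (g y * ∏ i ∈ S, (sgn (y i) - μY) / σY))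
          * ρ ^ S.card :=
        Finset.sum_congr rfl fun x _ => Finset.sum_congr rfl fun y _ => main x y
    _ = ∑ x : Fin d → Bool, ∑ S : Finset (Fin d), ∑ y : Fin d → Bool,
          ((∏ i, (∑ c : Bool, p (x i, c))) * (f x * ∏ i ∈ S, (sgn (x i) - μX) / σX))
          * ((∏ i, (∑ c : Bool, p (c, y i))) * (g y * ∏ i ∈ S, (sgn (y i) - μY) / σY))
          * ρ ^ S.card := Finset.sum_congr rfl fun x _ => Finset.sum_comm
    _ = ∑ S : Finset (Fin d), ∑ x : Fin d → Bool, ∑ y : Fin d → Bool,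
          ((∏ i, (∑ c : Bool, p (x i, c))) * (f x * ∏ i ∈ S, (sgn (x i) - μX) / σX))
          * ((∏ i, (∑ c : Bool, p (c, y i))) * (g y * ∏ i ∈ S, (sgn (y i) - μY) / σY))
          * ρ ^ S.card := Finset.sum_comm
    _ = _ := Finset.sum_congr rfl fun S _ => (expand S).symm
end

section
/- The set P(P_{XY}, Q_U, Q_V) of simulatable joint distributions with fixed marginals Q_U and Q_V is star-convex with center Q_U × Q_V: if Q_{UV} ∈ P(P_{XY}, Q_U, Q_V), then for every λ ∈ [0,1], the distribution λ·Q_{UV} + (1−λ)·Q_U Q_V is also in P(P_{XY}, Q_U, Q_V). -/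
open Filter

/-- Joint output distribution of `(f(X^d), g(Y^d))` when `(X^d, Y^d) ~ P_{XY}^d`. -/
noncomputable def outDist {X Y U V : Type*} [Fintype X] [Fintype Y]
    [DecidableEq U] [DecidableEq V]
    (p : X × Y → ℝ) (d : ℕ) (f : (Fin d → X) → U) (g : (Fin d → Y) → V) : U × V → ℝ :=
  fun uv => ∑ x : Fin d → X, ∑ y : Fin d → Y,
    if f x = uv.1 ∧ g y = uv.2 then ∏ i, p (x i, y i) else 0

/-- Total variation distance (sum of absolute differences). -/
noncomputable def dTV {W : Type*} [Fintype W] (μ ν : W → ℝ) : ℝ := ∑ w, |μ w - ν w|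

/-- A target distribution `Q` on `U × V` is simulatable from the source `P_{XY}` if there are
sequences of functions whose output distributions converge to `Q` in total variation. -/
noncomputable def Simulatable {X Y U V : Type*} [Fintype X] [Fintype Y]
    [Fintype U] [Fintype V] [DecidableEq U] [DecidableEq V]
    (p : X × Y → ℝ) (Q : U × V → ℝ) : Prop :=
  ∃ f : (d : ℕ) → (Fin d → X) → U, ∃ g : (d : ℕ) → (Fin d → Y) → V,
    Tendsto (fun d => dTV (outDist p d (f d) (g d)) Q) atTop (nhds 0)

section Aux
open Finset

lemma sum_pi_prod {K : Type*} [Fintype K] (d : ℕ) (M : Fin d → K → ℝ) :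
    ∑ w : Fin d → K, ∏ i, M i (w i) = ∏ i, ∑ b, M i b :=
  (Fintype.prod_sum M).symm

lemma sum_append {K : Type*} [Fintype K] (a b : ℕ) (h : (Fin (a+b) → K) → ℝ) :
    ∑ x : Fin (a+b) → K, h x = ∑ x1 : Fin a → K, ∑ x2 : Fin b → K, h (Fin.append x1 x2) := by
  rw [← Fintype.sum_prod_type (f := fun x : (Fin a → K) × (Fin b → K) => h (Fin.append x.1 x.2))]
  exact (Fintype.sum_equiv (Fin.appendEquiv a b) _ _ (fun x => rfl)).symm

lemma ite_mul_zero (c : Prop) [Decidable c] (a b : ℝ) :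
    (if c then a * b else 0) = (if c then a else 0) * b := by split <;> simp

lemma margX_one {X Y : Type*} [Fintype X] [Fintype Y] (p : X × Y → ℝ)
    (hp : ∑ z : X × Y, p z = 1) (r : ℕ) :
    ∑ x : Fin r → X, ∏ i, (∑ b : Y, p (x i, b)) = 1 := by
  rw [sum_pi_prod r (fun _ a => ∑ b : Y, p (a, b))]
  have h1 : ∑ a : X, ∑ b : Y, p (a, b) = 1 := by rw [← Fintype.sum_prod_type]; exact hp
  simp [h1]

lemma margXY_one {X Y : Type*} [Fintype X] [Fintype Y] (p : X × Y → ℝ)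
    (hp : ∑ z : X × Y, p z = 1) (r : ℕ) :
    ∑ x : Fin r → X, ∑ y : Fin r → Y, ∏ i, p (x i, y i) = 1 := by
  have h : ∀ x : Fin r → X, ∑ y : Fin r → Y, ∏ i, p (x i, y i)
      = ∏ i, ∑ b : Y, p (x i, b) := fun x => sum_pi_prod r (fun i b => p (x i, b))
  simp only [h]
  exact margX_one p hp r

lemma outDist_pad {X Y U V : Type*} [Fintype X] [Fintype Y] [DecidableEq U] [DecidableEq V]
    (p : X × Y → ℝ) (hp : ∑ z : X × Y, p z = 1)
    (d r : ℕ) (φ : (Fin d → X) → U) (γ : (Fin d → Y) → V) :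
    outDist p (d + r) (fun x => φ (fun i => x (Fin.castAdd r i)))
      (fun y => γ (fun i => y (Fin.castAdd r i))) = outDist p d φ γ := by
  funext uv
  simp only [outDist]
  rw [sum_append]
  simp only [sum_append, Fin.prod_univ_add, Fin.append_left, Fin.append_right]
  refine Finset.sum_congr rfl fun x1 _ => ?_
  simp only [ite_mul_zero]
  simp only [← Finset.mul_sum, ← Finset.sum_mul, sum_pi_prod]
  rw [margXY_one p hp r, mul_one]

lemma ite_mul3 (c : Prop) [Decidable c] (a b d : ℝ) :
    (if c then a * (b * d) else 0) = a * ((if c then b else 0) * d) := by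
  split <;> ring_nf <;> simp

lemma ite_and_split (a b : Prop) [Decidable a] [Decidable b] (t : ℝ) :
    (if a ∧ b then t else 0) = (if a then (1:ℝ) else 0) * (if b then t else 0) := by
  by_cases a <;> by_cases b <;> simp [*]

lemma my_ite_one_mul (c : Prop) [Decidable c] (a : ℝ) :
    (if c then (1:ℝ) else 0) * a = if c then a else 0 := by split <;> simp

lemma sum_ite_const {I : Type*} [Fintype I] (c : Prop) [Decidable c] (f : I → ℝ) :
    ∑ i : I, (if c then f i else 0) = if c then ∑ i, f i else 0 := by split <;> simp

lemma ite_decomp (c : Prop) [Decidable c] (s ka kb : ℝ) :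
    (if c then s * ka else s * kb) = (if c then s else 0) * ka + (if c then 0 else s) * kb := by
  split <;> simp

lemma factor_helper {I J : Type*} [Fintype I] [Fintype J] (a : J → ℝ) (s : I → ℝ) (t : J → ℝ) :
    ∑ x1 : I, ∑ x2 : J, ((a x2 * s x1) * t x2) = (∑ x1, s x1) * ∑ x2, a x2 * t x2 := by
  rw [Finset.sum_mul_sum]
  exact Finset.sum_congr rfl fun x1 _ => Finset.sum_congr rfl fun x2 _ => by ring

lemma T_eval {X Y U V : Type*} [Fintype X] [Fintype Y] [Fintype U] [Fintype V]
    [DecidableEq U] [DecidableEq V]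
    (p : X × Y → ℝ) (hp : ∑ z : X × Y, p z = 1) (d1 d2 : ℕ)
    (f1 : (Fin d1 → X) → U) (g1 : (Fin d1 → Y) → V) (hu : (Fin d2 → X) → U)
    (u : U) (v : V) (c : Prop) [Decidable c] :
    (∑ x1 : Fin d1 → X, ∑ x2 : Fin d2 → X,
      ((∑ y1 : Fin d1 → Y,
          if (if c then f1 x1 else hu x2) = u ∧ g1 y1 = v then ∏ i, p (x1 i, y1 i) else 0)
        * ∑ y2 : Fin d2 → Y, ∏ i, p (x2 i, y2 i)))
    = if c then
        ∑ x1 : Fin d1 → X, ∑ y1 : Fin d1 → Y,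
          if f1 x1 = u ∧ g1 y1 = v then ∏ i, p (x1 i, y1 i) else 0
      else
        (∑ x2 : Fin d2 → X, if hu x2 = u then ∏ i, (∑ b : Y, p (x2 i, b)) else 0)
          * ∑ y1 : Fin d1 → Y, if g1 y1 = v then ∏ i, (∑ a : X, p (a, y1 i)) else 0 := by
  by_cases h : c
  · simp only [if_pos h]
    simp only [← Finset.mul_sum, margXY_one p hp d2, mul_one]
  · simp only [if_neg h]
    simp only [ite_and_split]
    simp only [← Finset.mul_sum]
    rw [factor_helper]
    rw [mul_comm]
    congr 1
    · simp only [my_ite_one_mul]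
      refine Finset.sum_congr rfl fun x2 _ => ?_
      rw [sum_pi_prod d2 fun i b => p (x2 i, b)]
    · rw [Finset.sum_comm]
      simp only [sum_ite_const]
      refine Finset.sum_congr rfl fun y1 _ => ?_
      rw [sum_pi_prod d1 fun i a => p (a, y1 i)]

lemma key_formula {X Y U V : Type*} [Fintype X] [Fintype Y] [Fintype U] [Fintype V]
    [DecidableEq U] [DecidableEq V]
    (p : X × Y → ℝ) (hp : ∑ z : X × Y, p z = 1)
    (d0 d1 d2 : ℕ) (hc : (Fin d0 → X) → Fin 2)
    (f1 : (Fin d1 → X) → U) (g1 : (Fin d1 → Y) → V) (hu : (Fin d2 → X) → U) (uv : U × V) :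
    outDist p (d0 + (d1 + d2))
      (fun x => if hc (fun i => x (Fin.castAdd (d1 + d2) i)) = 1
        then f1 (fun i => x (Fin.natAdd d0 (Fin.castAdd d2 i)))
        else hu (fun i => x (Fin.natAdd d0 (Fin.natAdd d1 i))))
      (fun y => g1 (fun i => y (Fin.natAdd d0 (Fin.castAdd d2 i)))) uv
    = (∑ x0 : Fin d0 → X, if hc x0 = 1 then ∏ i, (∑ b : Y, p (x0 i, b)) else 0)
        * outDist p d1 f1 g1 uv
      + (1 - ∑ x0 : Fin d0 → X, if hc x0 = 1 then ∏ i, (∑ b : Y, p (x0 i, b)) else 0)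
        * ((∑ x2 : Fin d2 → X, if hu x2 = uv.1 then ∏ i, (∑ b : Y, p (x2 i, b)) else 0)
          * (∑ y1 : Fin d1 → Y, if g1 y1 = uv.2 then ∏ i, (∑ a : X, p (a, y1 i)) else 0)) := by
  simp only [outDist]
  rw [sum_append]
  simp only [sum_append, Fin.prod_univ_add, Fin.append_left, Fin.append_right]
  simp only [ite_mul3]
  simp only [← Finset.mul_sum, ← Finset.sum_mul, sum_pi_prod]
  simp only [T_eval p hp d1 d2 f1 g1 hu uv.1 uv.2]
  have hW : ∀ x0 : Fin d0 → X, (∑ y0 : Fin d0 → Y, ∏ i, p (x0 i, y0 i))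
      = ∏ i, ∑ b : Y, p (x0 i, b) := fun x0 => sum_pi_prod d0 fun i b => p (x0 i, b)
  simp only [hW, mul_ite, ite_decomp]
  rw [Finset.sum_add_distrib, ← Finset.sum_mul, ← Finset.sum_mul]
  have hcomp : ∑ x0 : Fin d0 → X, (if hc x0 = 1 then 0 else ∏ i, ∑ b : Y, p (x0 i, b))
      = 1 - ∑ x0 : Fin d0 → X, (if hc x0 = 1 then ∏ i, ∑ b : Y, p (x0 i, b) else 0) := by
    have hpt : ∀ x0 : Fin d0 → X, (if hc x0 = 1 then 0 else ∏ i, ∑ b : Y, p (x0 i, b))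
        = (∏ i, ∑ b : Y, p (x0 i, b)) - (if hc x0 = 1 then ∏ i, ∑ b : Y, p (x0 i, b) else 0) := by
      intro x0; split <;> simp
    simp only [hpt]
    rw [Finset.sum_sub_distrib, margX_one p hp d0]
  rw [hcomp]

lemma dTV_nonneg {W : Type*} [Fintype W] (μ ν : W → ℝ) : 0 ≤ dTV μ ν :=
  Finset.sum_nonneg fun _ _ => abs_nonneg _

lemma margY_one {X Y : Type*} [Fintype X] [Fintype Y] (p : X × Y → ℝ)
    (hp : ∑ z : X × Y, p z = 1) (r : ℕ) :
    ∑ y : Fin r → Y, ∏ i, (∑ a : X, p (a, y i)) = 1 := by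
  rw [sum_pi_prod r (fun _ b => ∑ a : X, p (a, b))]
  have h1 : ∑ b : Y, ∑ a : X, p (a, b) = 1 := by
    rw [Finset.sum_comm, ← Fintype.sum_prod_type]; exact hp
  simp [h1]

lemma sum_prod_mul {U V : Type*} [Fintype U] [Fintype V] (F : U → ℝ) (G : V → ℝ) :
    ∑ uv : U × V, F uv.1 * G uv.2 = (∑ u, F u) * ∑ v, G v := by
  rw [Fintype.sum_prod_type]
  exact (Finset.sum_mul_sum _ _ _ _).symm

lemma outDist_nonneg {X Y U V : Type*} [Fintype X] [Fintype Y] [DecidableEq U] [DecidableEq V]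
    (p : X × Y → ℝ) (hpos : ∀ z, 0 ≤ p z) (d : ℕ) (f : (Fin d → X) → U)
    (g : (Fin d → Y) → V) (uv : U × V) : 0 ≤ outDist p d f g uv := by
  refine Finset.sum_nonneg fun x _ => Finset.sum_nonneg fun y _ => ?_
  split
  · exact Finset.prod_nonneg fun i _ => hpos _
  · exact le_refl 0

lemma outDist_sum_one {X Y U V : Type*} [Fintype X] [Fintype Y] [Fintype U] [Fintype V]
    [DecidableEq U] [DecidableEq V]
    (p : X × Y → ℝ) (hp : ∑ z : X × Y, p z = 1) (d : ℕ) (f : (Fin d → X) → U)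
    (g : (Fin d → Y) → V) : ∑ uv : U × V, outDist p d f g uv = 1 := by
  simp only [outDist]
  rw [Finset.sum_comm]
  have h1 : ∀ x : Fin d → X, ∑ uv : U × V, ∑ y : Fin d → Y,
      (if f x = uv.1 ∧ g y = uv.2 then ∏ i, p (x i, y i) else 0)
      = ∑ y : Fin d → Y, ∏ i, p (x i, y i) := by
    intro x
    rw [Finset.sum_comm]
    refine Finset.sum_congr rfl fun y _ => ?_
    simp only [ite_and_split]
    rw [sum_prod_mul (fun u => if f x = u then (1:ℝ) else 0)
      (fun v => if g y = v then ∏ i, p (x i, y i) else 0)]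
    simp
  simp only [h1]
  exact margXY_one p hp d

lemma dTV_mix {U V : Type*} [Fintype U] [Fintype V] (A Q : U × V → ℝ) (B : U → ℝ) (C : V → ℝ)
    (al lam e1 e2 e3 e4 : ℝ)
    (hA0 : ∀ z, 0 ≤ A z) (hB0 : ∀ u, 0 ≤ B u) (hC0 : ∀ v, 0 ≤ C v)
    (hA1 : ∑ z : U × V, A z = 1) (hB1 : ∑ u, B u = 1) (hC1 : ∑ v, C v = 1)
    (hQU0 : ∀ u, 0 ≤ ∑ v, Q (u, v)) (hQU1 : ∑ u : U, ∑ v : V, Q (u, v) = 1)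
    (hlam0 : 0 ≤ lam) (hlam1 : lam ≤ 1)
    (he1 : |al - lam| ≤ e1)
    (he2 : ∑ z : U × V, |A z - Q z| ≤ e2)
    (he3 : ∑ u, |B u - ∑ v, Q (u, v)| ≤ e3)
    (he4 : ∑ v, |C v - ∑ u, Q (u, v)| ≤ e4) :
    dTV (fun uv => al * A uv + (1 - al) * (B uv.1 * C uv.2))
      (fun uv => lam * Q uv + (1 - lam) * ((∑ v, Q (uv.1, v)) * (∑ u, Q (u, uv.2))))
      ≤ 2 * e1 + e2 + e3 + e4 := by
  have hpt : ∀ uv : U × V,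
      |al * A uv + (1 - al) * (B uv.1 * C uv.2)
        - (lam * Q uv + (1 - lam) * ((∑ v, Q (uv.1, v)) * (∑ u, Q (u, uv.2))))|
      ≤ |al - lam| * A uv + lam * |A uv - Q uv| + |al - lam| * (B uv.1 * C uv.2)
        + (1 - lam) * (|B uv.1 - ∑ v, Q (uv.1, v)| * C uv.2
            + (∑ v, Q (uv.1, v)) * |C uv.2 - ∑ u, Q (u, uv.2)|) := by
    intro uv
    set a := A uv; set q := Q uv; set b := B uv.1; set cc := C uv.2
    set qu := ∑ v, Q (uv.1, v); set qv := ∑ u, Q (u, uv.2)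
    have key : al * a + (1 - al) * (b * cc) - (lam * q + (1 - lam) * (qu * qv))
        = (al - lam) * a + lam * (a - q) + (lam - al) * (b * cc)
          + (1 - lam) * ((b - qu) * cc + qu * (cc - qv)) := by ring
    rw [key]
    have h4 : |(b - qu) * cc + qu * (cc - qv)| ≤ |b - qu| * cc + qu * |cc - qv| := by
      calc |(b - qu) * cc + qu * (cc - qv)| ≤ |(b - qu) * cc| + |qu * (cc - qv)| := abs_add_le _ _
        _ = |b - qu| * cc + qu * |cc - qv| := by
            rw [abs_mul, abs_mul, abs_of_nonneg (hC0 uv.2), abs_of_nonneg (hQU0 uv.1)]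
    calc |(al - lam) * a + lam * (a - q) + (lam - al) * (b * cc)
          + (1 - lam) * ((b - qu) * cc + qu * (cc - qv))|
        ≤ |(al - lam) * a + lam * (a - q) + (lam - al) * (b * cc)|
          + |(1 - lam) * ((b - qu) * cc + qu * (cc - qv))| := abs_add_le _ _
      _ ≤ (|(al - lam) * a| + |lam * (a - q)| + |(lam - al) * (b * cc)|)
          + |(1 - lam) * ((b - qu) * cc + qu * (cc - qv))| := by
            gcongr; exact abs_add_three _ _ _
      _ ≤ |al - lam| * a + lam * |a - q| + |al - lam| * (b * cc)
          + (1 - lam) * (|b - qu| * cc + qu * |cc - qv|) := by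
            have h1 : |(al - lam) * a| = |al - lam| * a := by
              rw [abs_mul, abs_of_nonneg (hA0 uv)]
            have h2 : |lam * (a - q)| = lam * |a - q| := by
              rw [abs_mul, abs_of_nonneg hlam0]
            have h3 : |(lam - al) * (b * cc)| = |al - lam| * (b * cc) := by
              rw [abs_mul, abs_sub_comm, abs_of_nonneg (mul_nonneg (hB0 uv.1) (hC0 uv.2))]
            have h5 : |(1 - lam) * ((b - qu) * cc + qu * (cc - qv))|
                ≤ (1 - lam) * (|b - qu| * cc + qu * |cc - qv|) := by
              rw [abs_mul, abs_of_nonneg (by linarith : (0:ℝ) ≤ 1 - lam)]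
              exact mul_le_mul_of_nonneg_left h4 (by linarith)
            linarith
  rw [dTV]
  refine le_trans (Finset.sum_le_sum fun uv _ => hpt uv) ?_
  have hBC : ∑ uv : U × V, B uv.1 * C uv.2 = 1 := by
    rw [sum_prod_mul, hB1, hC1, mul_one]
  have hT3 : ∑ uv : U × V, |B uv.1 - ∑ v, Q (uv.1, v)| * C uv.2
      = (∑ u, |B u - ∑ v, Q (u, v)|) * 1 := by
    rw [sum_prod_mul (fun u => |B u - ∑ v, Q (u, v)|) C, hC1]
  have hT4 : ∑ uv : U × V, (∑ v, Q (uv.1, v)) * |C uv.2 - ∑ u, Q (u, uv.2)|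
      = 1 * ∑ v, |C v - ∑ u, Q (u, v)| := by
    rw [sum_prod_mul (fun u => ∑ v, Q (u, v)) (fun v => |C v - ∑ u, Q (u, v)|), hQU1]
  have habs0 : (0:ℝ) ≤ ∑ z : U × V, |A z - Q z| := Finset.sum_nonneg fun _ _ => abs_nonneg _
  have h30 : (0:ℝ) ≤ ∑ u, |B u - ∑ v, Q (u, v)| := Finset.sum_nonneg fun _ _ => abs_nonneg _
  have h40 : (0:ℝ) ≤ ∑ v, |C v - ∑ u, Q (u, v)| := Finset.sum_nonneg fun _ _ => abs_nonneg _
  have he10 : (0:ℝ) ≤ |al - lam| := abs_nonneg _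
  simp only [Finset.sum_add_distrib, ← Finset.mul_sum]
  rw [hA1, hBC]
  rw [hT3, hT4] -- may fail due to mul_sum shape; check
  have k1 : lam * (∑ z : U × V, |A z - Q z|) ≤ lam * e2 := mul_le_mul_of_nonneg_left he2 hlam0
  have k2 : lam * e2 ≤ 1 * e2 := mul_le_mul_of_nonneg_right hlam1 (habs0.trans he2)
  have k3 : (1 - lam) * ((∑ u, |B u - ∑ v, Q (u, v)|) + (∑ v, |C v - ∑ u, Q (u, v)|))
      ≤ 1 * (e3 + e4) :=
    mul_le_mul (by linarith) (add_le_add he3 he4) (by positivity) (by norm_num)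
  have k4 : |al - lam| ≤ e1 := he1
  nlinarith [habs0, h30, h40, he10]

lemma simulatable_of {X Y U V : Type*} [Fintype X] [Fintype Y] [Fintype U] [Fintype V]
    [DecidableEq U] [DecidableEq V] [Nonempty U] [Nonempty V]
    (p : X × Y → ℝ) (T : U × V → ℝ)
    (h : ∀ ε : ℝ, 0 < ε → ∃ N : ℕ, ∀ r : ℕ, ∃ f : (Fin (N + r) → X) → U,
      ∃ g : (Fin (N + r) → Y) → V, dTV (outDist p (N + r) f g) T ≤ ε) :
    Simulatable p T := by
  classical
  have hmin : ∀ d : ℕ, ∃ fg : ((Fin d → X) → U) × ((Fin d → Y) → V),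
      ∀ fg' : ((Fin d → X) → U) × ((Fin d → Y) → V),
        dTV (outDist p d fg.1 fg.2) T ≤ dTV (outDist p d fg'.1 fg'.2) T := by
    intro d
    obtain ⟨fg, -, hfg⟩ := Finset.exists_min_image Finset.univ
      (fun fg : ((Fin d → X) → U) × ((Fin d → Y) → V) => dTV (outDist p d fg.1 fg.2) T)
      ⟨Classical.arbitrary _, Finset.mem_univ _⟩
    exact ⟨fg, fun fg' => hfg fg' (Finset.mem_univ _)⟩
  choose FG hFG using hmin
  refine ⟨fun d => (FG d).1, fun d => (FG d).2, ?_⟩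
  rw [Metric.tendsto_atTop]
  intro ε hε
  obtain ⟨N, hN⟩ := h (ε/2) (by linarith)
  refine ⟨N, fun d hd => ?_⟩
  obtain ⟨r, rfl⟩ := Nat.exists_eq_add_of_le hd
  obtain ⟨f, g, hfg⟩ := hN r
  have h0 : 0 ≤ dTV (outDist p (N+r) (FG (N+r)).1 (FG (N+r)).2) T := dTV_nonneg _ _
  have hle := hFG (N+r) (f, g)
  rw [Real.dist_eq, sub_zero, abs_of_nonneg h0]
  calc dTV (outDist p (N+r) (FG (N+r)).1 (FG (N+r)).2) T
      ≤ dTV (outDist p (N+r) f g) T := hle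
    _ ≤ ε/2 := hfg
    _ < ε := by linarith

end Aux

/-- Star-convexity of the set of simulatable distributions with fixed marginals,
with center the product of the marginals: if `Q` is simulatable then for every `λ ∈ [0,1]` so is
`λ·Q + (1−λ)·Q_U Q_V`, and the mixture has the same marginals as `Q`.  The hypotheses
`hsimX, hsimY` state that each agent can simulate any finite-alphabet marginal distribution
arbitrarily well from its i.i.d. samples (standard source simulation). -/
theorem stmt_5 {X Y U V : Type*} [Fintype X] [Fintype Y] [Fintype U] [Fintype V]
    [DecidableEq U] [DecidableEq V]
    (p : X × Y → ℝ) (hp : ∑ z : X × Y, p z = 1) (hpos : ∀ z, 0 ≤ p z)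
    (hsimX : ∀ (n : ℕ) (q : Fin n → ℝ), (∀ i, 0 ≤ q i) → (∑ i, q i = 1) →
      ∀ ε : ℝ, 0 < ε → ∃ d : ℕ, ∃ h : (Fin d → X) → Fin n,
        dTV (fun i => ∑ x : Fin d → X,
          if h x = i then ∏ j, (∑ y : Y, p (x j, y)) else 0) q ≤ ε)
    (hsimY : ∀ (n : ℕ) (q : Fin n → ℝ), (∀ i, 0 ≤ q i) → (∑ i, q i = 1) →
      ∀ ε : ℝ, 0 < ε → ∃ d : ℕ, ∃ h : (Fin d → Y) → Fin n,
        dTV (fun i => ∑ y : Fin d → Y,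
          if h y = i then ∏ j, (∑ x : X, p (x, y j)) else 0) q ≤ ε)
    (Q : U × V → ℝ) (hQpos : ∀ z, 0 ≤ Q z) (hQ1 : ∑ z : U × V, Q z = 1)
    (hQ : Simulatable p Q)
    (lam : ℝ) (hlam0 : 0 ≤ lam) (hlam1 : lam ≤ 1) :
    Simulatable p (fun uv =>
        lam * Q uv + (1 - lam) * ((∑ v : V, Q (uv.1, v)) * (∑ u : U, Q (u, uv.2)))) ∧
    (∀ u : U, ∑ v : V, (lam * Q (u, v)
        + (1 - lam) * ((∑ v' : V, Q (u, v')) * (∑ u' : U, Q (u', v))))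
      = ∑ v : V, Q (u, v)) ∧
    (∀ v : V, ∑ u : U, (lam * Q (u, v)
        + (1 - lam) * ((∑ v' : V, Q (u, v')) * (∑ u' : U, Q (u', v))))
      = ∑ u : U, Q (u, v)) := by
  classical
  have hQ1' : ∑ u : U, ∑ v : V, Q (u, v) = 1 := by
    rw [← Fintype.sum_prod_type]; exact hQ1
  have hQ1'' : ∑ v : V, ∑ u : U, Q (u, v) = 1 := by
    rw [Finset.sum_comm]; exact hQ1'
  have hne : Nonempty (U × V) := by
    by_contra h
    rw [not_nonempty_iff] at h
    rw [Finset.univ_eq_empty, Finset.sum_empty] at hQ1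
    exact zero_ne_one hQ1
  haveI : Nonempty U := ⟨hne.some.1⟩
  haveI : Nonempty V := ⟨hne.some.2⟩
  have hQU0 : ∀ u : U, 0 ≤ ∑ v : V, Q (u, v) :=
    fun u => Finset.sum_nonneg fun v _ => hQpos _
  refine ⟨?_, ?_, ?_⟩
  · -- Simulatability
    apply simulatable_of
    intro ε hε
    have hε5 : 0 < ε/5 := by linarith
    -- extract a good protocol for Q
    obtain ⟨fseq, gseq, htend⟩ := hQ
    rw [Metric.tendsto_atTop] at htend
    obtain ⟨d1, hd1⟩ := htend (ε/5) hε5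
    have hA' := hd1 d1 le_rfl
    rw [Real.dist_eq, sub_zero, abs_of_nonneg (dTV_nonneg _ _)] at hA'
    set f1 := fseq d1 with hf1
    set g1 := gseq d1 with hg1
    have hA : dTV (outDist p d1 f1 g1) Q ≤ ε/5 := le_of_lt hA'
    -- coin
    set q2 : Fin 2 → ℝ := fun i => if i = 1 then lam else 1 - lam with hq2
    have hq20 : ∀ i, 0 ≤ q2 i := by intro i; dsimp [q2]; split <;> linarith
    have hq21 : ∑ i, q2 i = 1 := by
      rw [Fin.sum_univ_two]
      have h01 : (0 : Fin 2) ≠ 1 := by decide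
      simp [q2, h01]
    obtain ⟨d0, hc, hcoin⟩ := hsimX 2 q2 hq20 hq21 (ε/5) hε5
    -- marginal simulation for Q_U
    set eU := Fintype.equivFin U with heU
    set qU : Fin (Fintype.card U) → ℝ := fun i => ∑ v : V, Q (eU.symm i, v) with hqU
    have hqU0 : ∀ i, 0 ≤ qU i := fun i => hQU0 _
    have hqU1 : ∑ i, qU i = 1 := by
      rw [hqU]
      rw [Equiv.sum_comp eU.symm (fun u => ∑ v : V, Q (u, v))]
      exact hQ1'
    obtain ⟨d2, hu0, hB⟩ := hsimX (Fintype.card U) qU hqU0 hqU1 (ε/5) hε5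
    set hu : (Fin d2 → X) → U := fun x2 => eU.symm (hu0 x2) with hhu
    refine ⟨d0 + (d1 + d2), fun r => ?_⟩
    set Φ : (Fin (d0 + (d1 + d2)) → X) → U := fun x =>
      if hc (fun i => x (Fin.castAdd (d1 + d2) i)) = 1
        then f1 (fun i => x (Fin.natAdd d0 (Fin.castAdd d2 i)))
        else hu (fun i => x (Fin.natAdd d0 (Fin.natAdd d1 i))) with hPhi
    set Γ : (Fin (d0 + (d1 + d2)) → Y) → V := fun y =>
      g1 (fun i => y (Fin.natAdd d0 (Fin.castAdd d2 i))) with hGam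
    refine ⟨fun x => Φ (fun i => x (Fin.castAdd r i)),
      fun y => Γ (fun i => y (Fin.castAdd r i)), ?_⟩
    rw [outDist_pad p hp (d0 + (d1 + d2)) r Φ Γ]
    have hod : outDist p (d0 + (d1 + d2)) Φ Γ
        = fun uv => (∑ x0 : Fin d0 → X, if hc x0 = 1 then ∏ i, (∑ b : Y, p (x0 i, b)) else 0)
            * outDist p d1 f1 g1 uv
          + (1 - ∑ x0 : Fin d0 → X, if hc x0 = 1 then ∏ i, (∑ b : Y, p (x0 i, b)) else 0)
            * ((∑ x2 : Fin d2 → X, if hu x2 = uv.1 then ∏ i, (∑ b : Y, p (x2 i, b)) else 0)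
              * (∑ y1 : Fin d1 → Y, if g1 y1 = uv.2 then ∏ i, (∑ a : X, p (a, y1 i)) else 0)) := by
      rw [hPhi, hGam]
      exact funext (key_formula p hp d0 d1 d2 hc f1 g1 hu)
    rw [hod]
    -- abbreviations
    set α : ℝ := ∑ x0 : Fin d0 → X, if hc x0 = 1 then ∏ i, (∑ b : Y, p (x0 i, b)) else 0 with hal
    set Bf : U → ℝ := fun u => ∑ x2 : Fin d2 → X,
      if hu x2 = u then ∏ i, (∑ b : Y, p (x2 i, b)) else 0 with hBf
    set Cf : V → ℝ := fun v => ∑ y1 : Fin d1 → Y,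
      if g1 y1 = v then ∏ i, (∑ a : X, p (a, y1 i)) else 0 with hCf
    have hB0 : ∀ u, 0 ≤ Bf u := by
      intro u
      refine Finset.sum_nonneg fun x2 _ => ?_
      split
      · exact Finset.prod_nonneg fun i _ => Finset.sum_nonneg fun b _ => hpos _
      · exact le_refl 0
    have hC0 : ∀ v, 0 ≤ Cf v := by
      intro v
      refine Finset.sum_nonneg fun y1 _ => ?_
      split
      · exact Finset.prod_nonneg fun i _ => Finset.sum_nonneg fun a _ => hpos _
      · exact le_refl 0
    have hB1 : ∑ u, Bf u = 1 := by
      rw [hBf]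
      rw [Finset.sum_comm]
      simp only [Finset.sum_ite_eq, Finset.mem_univ, if_true]
      exact margX_one p hp d2
    have hC1 : ∑ v, Cf v = 1 := by
      rw [hCf]
      rw [Finset.sum_comm]
      simp only [Finset.sum_ite_eq, Finset.mem_univ, if_true]
      exact margY_one p hp d1
    have he1 : |α - lam| ≤ ε/5 := by
      have hα1 : α = (fun i => ∑ x : Fin d0 → X,
          if hc x = i then ∏ j, (∑ y : Y, p (x j, y)) else 0) 1 := rfl
      have hq2l : q2 1 = lam := by simp [q2]
      calc |α - lam|
          = |(fun i => ∑ x : Fin d0 → X,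
              if hc x = i then ∏ j, (∑ y : Y, p (x j, y)) else 0) 1 - q2 1| := by
            rw [← hα1, hq2l]
        _ ≤ ∑ i : Fin 2, |(fun i => ∑ x : Fin d0 → X,
              if hc x = i then ∏ j, (∑ y : Y, p (x j, y)) else 0) i - q2 i| :=
            Finset.single_le_sum (f := fun i => |(fun i => ∑ x : Fin d0 → X,
              if hc x = i then ∏ j, (∑ y : Y, p (x j, y)) else 0) i - q2 i|)
              (fun i _ => abs_nonneg _) (Finset.mem_univ 1)
        _ ≤ ε/5 := hcoin
    have he2 : ∑ z : U × V, |outDist p d1 f1 g1 z - Q z| ≤ ε/5 := hA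
    have he3 : ∑ u, |Bf u - ∑ v, Q (u, v)| ≤ ε/5 := by
      calc ∑ u, |Bf u - ∑ v, Q (u, v)|
          = ∑ i : Fin (Fintype.card U), |Bf (eU.symm i) - ∑ v, Q (eU.symm i, v)| :=
            (Equiv.sum_comp eU.symm (fun u => |Bf u - ∑ v, Q (u, v)|)).symm
        _ = ∑ i : Fin (Fintype.card U), |(∑ x : Fin d2 → X,
              if hu0 x = i then ∏ j, (∑ y : Y, p (x j, y)) else 0) - qU i| := by
            have hBfe : ∀ i, Bf (eU.symm i) = ∑ x : Fin d2 → X,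
                if hu0 x = i then ∏ j, (∑ y : Y, p (x j, y)) else 0 := by
              intro i
              rw [hBf]
              refine Finset.sum_congr rfl fun x2 _ => ?_
              rw [hhu]
              simp
            refine Finset.sum_congr rfl fun i _ => ?_
            rw [hBfe i]
        _ ≤ ε/5 := hB
    have hCA : ∀ v, Cf v = ∑ u, outDist p d1 f1 g1 (u, v) := by
      intro v
      simp only [outDist]
      rw [Finset.sum_comm]
      have hx1 : ∀ x1 : Fin d1 → X, ∑ u : U, ∑ y1 : Fin d1 → Y,
          (if f1 x1 = u ∧ g1 y1 = v then ∏ i, p (x1 i, y1 i) else 0)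
          = ∑ y1 : Fin d1 → Y, (if g1 y1 = v then ∏ i, p (x1 i, y1 i) else 0) := by
        intro x1
        rw [Finset.sum_comm]
        refine Finset.sum_congr rfl fun y1 _ => ?_
        simp only [ite_and_split, ← Finset.sum_mul]
        simp [Finset.sum_ite_eq]
      simp only [hx1]
      rw [Finset.sum_comm, hCf]
      refine Finset.sum_congr rfl fun y1 _ => ?_
      rw [sum_ite_const]
      congr 1
      rw [sum_pi_prod d1 fun i a => p (a, y1 i)]
    have he4 : ∑ v, |Cf v - ∑ u, Q (u, v)| ≤ ε/5 := by
      calc ∑ v, |Cf v - ∑ u, Q (u, v)|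
          ≤ ∑ v, ∑ u, |outDist p d1 f1 g1 (u, v) - Q (u, v)| := by
            refine Finset.sum_le_sum fun v _ => ?_
            rw [hCA v, ← Finset.sum_sub_distrib]
            exact Finset.abs_sum_le_sum_abs _ _
        _ = ∑ z : U × V, |outDist p d1 f1 g1 z - Q z| := by
            rw [Finset.sum_comm]
            exact (Fintype.sum_prod_type
              (fun z : U × V => |outDist p d1 f1 g1 z - Q z|)).symm
        _ ≤ ε/5 := he2
    refine le_trans (dTV_mix (outDist p d1 f1 g1) Q Bf Cf α lam (ε/5) (ε/5) (ε/5) (ε/5)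
      (outDist_nonneg p hpos d1 f1 g1) hB0 hC0 (outDist_sum_one p hp d1 f1 g1) hB1 hC1
      hQU0 hQ1' hlam0 hlam1 he1 he2 he3 he4) (by linarith)
  · -- first marginal
    intro u
    simp only [Finset.sum_add_distrib, ← Finset.mul_sum]
    rw [hQ1'']
    ring
  · -- second marginal
    intro v
    simp only [Finset.sum_add_distrib, ← Finset.sum_mul, ← Finset.mul_sum]
    rw [hQ1']
    ring
end

section
/- Let f, g and f', g' be functions {-1,1}^d → {-1,1} with distance spectra S(f,g) = (n_0,…,n_d) and S(f',g') = (n'_0,…,n'_d), where n_k = |{(x^d,y^d): d_H(x^d,y^d)=k, f(x^d)=g(y^d)=1}|, and suppose all four functions have the same output biases. If the cumulative sums satisfy Σ_{k≤ℓ} n_k ≤ Σ_{k≤ℓ} n'_k for all ℓ ∈ [d], then under the doubly-symmetric binary source with ρ ∈ (0,1) and uniform marginals, E[f(X^d) g(Y^d)] ≤ E[f'(X^d) g'(Y^d)]. -/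
open Finset

noncomputable def Wt (d : ℕ) (ρ : ℝ) (k : ℕ) : ℝ := ((1+ρ)/4) ^ (d - k) * ((1-ρ)/4) ^ k

noncomputable def Cst (d : ℕ) (ρ : ℝ) : ℝ :=
  ∑ y : Fin d → Bool, Wt d ρ (hammingDist (fun _ => true) y)

lemma prod_eq_Wt (d : ℕ) (ρ : ℝ) (x y : Fin d → Bool) :
    (∏ i, if x i = y i then (1 + ρ) / 4 else (1 - ρ) / 4) = Wt d ρ (hammingDist x y) := by
  classical
  rw [Finset.prod_ite, Finset.prod_const, Finset.prod_const]
  have h1 : (Finset.univ.filter fun i => ¬ x i = y i).card = hammingDist x y := rfl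
  have h2 : (Finset.univ.filter fun i => x i = y i).card = d - hammingDist x y := by
    have := Finset.card_filter_add_card_filter_not (s := (Finset.univ : Finset (Fin d)))
      (p := fun i => x i = y i)
    simp only [Finset.card_univ, Fintype.card_fin] at this
    omega
  rw [h1, h2, Wt]

lemma sum_Wt_const (d : ℕ) (ρ : ℝ) (x : Fin d → Bool) :
    ∑ y : Fin d → Bool, Wt d ρ (hammingDist x y) = Cst d ρ := by
  classical
  rw [Cst]
  set x' : Fin d → Bool := fun _ => true with hx'
  set σ : (Fin d → Bool) → (Fin d → Bool) := fun y i => if x' i = x i then y i else !(y i) with hσ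
  have hinv : Function.Involutive σ := by
    intro y; funext i; by_cases h : x' i = x i <;> simp [σ, h]
  refine Fintype.sum_bijective σ hinv.bijective _ _ ?_
  intro y
  congr 1
  show (Finset.univ.filter fun i => x i ≠ y i).card = (Finset.univ.filter fun i => x' i ≠ σ y i).card
  congr 1
  ext i
  simp only [Finset.mem_filter, Finset.mem_univ, true_and, σ]
  by_cases h : x' i = x i
  · simp [h]
  · cases hx : x i <;> cases hy : y i <;> simp_all

lemma Wt_nonneg (d : ℕ) (ρ : ℝ) (hρ0 : 0 < ρ) (hρ1 : ρ < 1) (k : ℕ) : 0 ≤ Wt d ρ k := by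
  have h1 : (0:ℝ) ≤ (1+ρ)/4 := by linarith
  have h2 : (0:ℝ) ≤ (1-ρ)/4 := by linarith
  exact mul_nonneg (pow_nonneg h1 _) (pow_nonneg h2 _)

lemma Wt_antitone (d : ℕ) (ρ : ℝ) (hρ0 : 0 < ρ) (hρ1 : ρ < 1) (k : ℕ) (hk : k < d) :
    Wt d ρ (k+1) ≤ Wt d ρ k := by
  have h1 : (0:ℝ) ≤ (1+ρ)/4 := by linarith
  have h2 : (0:ℝ) ≤ (1-ρ)/4 := by linarith
  have hle : (1-ρ)/4 ≤ (1+ρ)/4 := by linarith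
  have hd : d - k = (d - (k+1)) + 1 := by omega
  rw [Wt, Wt, hd, pow_succ, pow_succ]
  calc ((1+ρ)/4) ^ (d-(k+1)) * (((1-ρ)/4) ^ k * ((1-ρ)/4))
      ≤ ((1+ρ)/4) ^ (d-(k+1)) * (((1-ρ)/4) ^ k * ((1+ρ)/4)) := by
        apply mul_le_mul_of_nonneg_left _ (pow_nonneg h1 _)
        exact mul_le_mul_of_nonneg_left hle (pow_nonneg h2 _)
    _ = ((1+ρ)/4) ^ (d-(k+1)) * ((1+ρ)/4) * ((1-ρ)/4) ^ k := by ring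

lemma aux_main (d : ℕ) (ρ : ℝ) (F G : (Fin d → Bool) → ℝ)
    (hF : ∀ x, F x = 1 ∨ F x = -1) (hG : ∀ y, G y = 1 ∨ G y = -1) :
    ∑ x : Fin d → Bool, ∑ y : Fin d → Bool,
        (∏ i, if x i = y i then (1 + ρ) / 4 else (1 - ρ) / 4) * (F x * G y)
    = 4 * (∑ k ∈ Finset.range (d+1),
        ((Finset.univ.filter fun xy : (Fin d → Bool) × (Fin d → Bool) =>
              hammingDist xy.1 xy.2 = k ∧ F xy.1 = 1 ∧ G xy.2 = 1).card : ℝ) * Wt d ρ k)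
      - 2 * ((Finset.univ.filter fun x => F x = 1).card : ℝ) * Cst d ρ
      - 2 * ((Finset.univ.filter fun y => G y = 1).card : ℝ) * Cst d ρ
      + 2^d * Cst d ρ := by
  classical
  set a : (Fin d → Bool) → ℝ := fun x => if F x = 1 then 1 else 0 with ha
  set b : (Fin d → Bool) → ℝ := fun y => if G y = 1 then 1 else 0 with hb
  have hpt : ∀ x y : Fin d → Bool,
      (∏ i, if x i = y i then (1 + ρ) / 4 else (1 - ρ) / 4) * (F x * G y)
      = 4 * (Wt d ρ (hammingDist x y) * (a x * b y))
        - 2 * (Wt d ρ (hammingDist x y) * a x)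
        - 2 * (Wt d ρ (hammingDist x y) * b y)
        + Wt d ρ (hammingDist x y) := by
    intro x y
    rw [prod_eq_Wt]
    rcases hF x with h1 | h1 <;> rcases hG y with h2 | h2 <;>
      simp [a, b, h1, h2, show ¬((-1:ℝ) = 1) by norm_num] <;> ring
  simp_rw [hpt]
  have hsplit : ∀ (A B C D : (Fin d → Bool) → (Fin d → Bool) → ℝ),
      ∑ x : Fin d → Bool, ∑ y : Fin d → Bool, (4 * A x y - 2 * B x y - 2 * C x y + D x y)
      = 4 * (∑ x, ∑ y, A x y) - 2 * (∑ x, ∑ y, B x y) - 2 * (∑ x, ∑ y, C x y)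
        + (∑ x, ∑ y, D x y) := by
    intro A B C D
    simp [Finset.sum_sub_distrib, Finset.sum_add_distrib, Finset.mul_sum]
  rw [hsplit]
  have hS2 : ∑ x : Fin d → Bool, ∑ y : Fin d → Bool, Wt d ρ (hammingDist x y) * a x
      = ((Finset.univ.filter fun x => F x = 1).card : ℝ) * Cst d ρ := by
    have : ∀ x : Fin d → Bool, ∑ y : Fin d → Bool, Wt d ρ (hammingDist x y) * a x
        = a x * Cst d ρ := by
      intro x
      rw [← Finset.sum_mul, sum_Wt_const, mul_comm]
    simp_rw [this]
    rw [← Finset.sum_mul]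
    congr 1
    simp [ha, Finset.sum_boole]
  have hS3 : ∑ x : Fin d → Bool, ∑ y : Fin d → Bool, Wt d ρ (hammingDist x y) * b y
      = ((Finset.univ.filter fun y => G y = 1).card : ℝ) * Cst d ρ := by
    rw [Finset.sum_comm]
    have : ∀ y : Fin d → Bool, ∑ x : Fin d → Bool, Wt d ρ (hammingDist x y) * b y
        = b y * Cst d ρ := by
      intro y
      rw [← Finset.sum_mul]
      simp_rw [hammingDist_comm]
      rw [sum_Wt_const, mul_comm]
    simp_rw [this]
    rw [← Finset.sum_mul]
    congr 1
    simp [hb, Finset.sum_boole]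
  have hS4 : ∑ x : Fin d → Bool, ∑ y : Fin d → Bool, Wt d ρ (hammingDist x y)
      = 2^d * Cst d ρ := by
    simp_rw [sum_Wt_const]
    rw [Finset.sum_const]
    simp [Finset.card_univ, mul_comm]
  have hS1 : ∑ x : Fin d → Bool, ∑ y : Fin d → Bool,
      Wt d ρ (hammingDist x y) * (a x * b y)
      = ∑ k ∈ Finset.range (d+1),
        ((Finset.univ.filter fun xy : (Fin d → Bool) × (Fin d → Bool) =>
              hammingDist xy.1 xy.2 = k ∧ F xy.1 = 1 ∧ G xy.2 = 1).card : ℝ) * Wt d ρ k := by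
    have hab : ∀ x y : Fin d → Bool, Wt d ρ (hammingDist x y) * (a x * b y)
        = if F x = 1 ∧ G y = 1 then Wt d ρ (hammingDist x y) else 0 := by
      intro x y
      by_cases h1 : F x = 1 <;> by_cases h2 : G y = 1 <;> simp [a, b, h1, h2]
    simp_rw [hab]
    rw [← Finset.sum_product']
    rw [Finset.univ_product_univ]
    rw [← Finset.sum_filter]
    have hmaps : ∀ xy ∈ (Finset.univ.filter fun xy : (Fin d → Bool) × (Fin d → Bool) =>
        F xy.1 = 1 ∧ G xy.2 = 1), hammingDist xy.1 xy.2 ∈ Finset.range (d+1) := by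
      intro xy _
      rw [Finset.mem_range, Nat.lt_succ_iff]
      simpa using hammingDist_le_card_fintype (x := xy.1) (y := xy.2)
    rw [← Finset.sum_fiberwise_of_maps_to hmaps (fun xy => Wt d ρ (hammingDist xy.1 xy.2))]
    refine Finset.sum_congr rfl fun k hk => ?_
    have hset : ((Finset.univ.filter fun xy : (Fin d → Bool) × (Fin d → Bool) =>
          F xy.1 = 1 ∧ G xy.2 = 1).filter fun xy => hammingDist xy.1 xy.2 = k)
        = (Finset.univ.filter fun xy : (Fin d → Bool) × (Fin d → Bool) =>
              hammingDist xy.1 xy.2 = k ∧ F xy.1 = 1 ∧ G xy.2 = 1) := by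
      rw [Finset.filter_filter]
      apply Finset.filter_congr
      intro xy _
      tauto
    rw [hset]
    have hcon : ∀ xy ∈ (Finset.univ.filter fun xy : (Fin d → Bool) × (Fin d → Bool) =>
          hammingDist xy.1 xy.2 = k ∧ F xy.1 = 1 ∧ G xy.2 = 1),
        Wt d ρ (hammingDist xy.1 xy.2) = Wt d ρ k := by
      intro xy hxy
      rw [(Finset.mem_filter.mp hxy).2.1]
    rw [Finset.sum_congr rfl hcon, Finset.sum_const, nsmul_eq_mul]
  rw [hS1, hS2, hS3, hS4]
  ring

/-- If the distance spectrum of `(f',g')` dominates that of `(f,g)` in cumulative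
sums, and both pairs have the same output biases, then under the doubly-symmetric binary
source with correlation `ρ ∈ (0,1)`, `E[f(X^d)g(Y^d)] ≤ E[f'(X^d)g'(Y^d)]`. -/
theorem stmt_11 (d : ℕ) (ρ : ℝ) (hρ0 : 0 < ρ) (hρ1 : ρ < 1)
    (f g f' g' : (Fin d → Bool) → ℝ)
    (hf : ∀ x, f x = 1 ∨ f x = -1) (hg : ∀ y, g y = 1 ∨ g y = -1)
    (hf' : ∀ x, f' x = 1 ∨ f' x = -1) (hg' : ∀ y, g' y = 1 ∨ g' y = -1)
    (hbiasf : (Finset.univ.filter fun x : Fin d → Bool => f x = 1).card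
      = (Finset.univ.filter fun x : Fin d → Bool => f' x = 1).card)
    (hbiasg : (Finset.univ.filter fun y : Fin d → Bool => g y = 1).card
      = (Finset.univ.filter fun y : Fin d → Bool => g' y = 1).card)
    (hdom : ∀ ℓ : ℕ, ℓ ≤ d →
      ∑ k ∈ Finset.range (ℓ + 1),
          (Finset.univ.filter fun xy : (Fin d → Bool) × (Fin d → Bool) =>
            hammingDist xy.1 xy.2 = k ∧ f xy.1 = 1 ∧ g xy.2 = 1).card
        ≤ ∑ k ∈ Finset.range (ℓ + 1),
          (Finset.univ.filter fun xy : (Fin d → Bool) × (Fin d → Bool) =>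
            hammingDist xy.1 xy.2 = k ∧ f' xy.1 = 1 ∧ g' xy.2 = 1).card) :
    ∑ x : Fin d → Bool, ∑ y : Fin d → Bool,
        (∏ i, if x i = y i then (1 + ρ) / 4 else (1 - ρ) / 4) * (f x * g y)
      ≤ ∑ x : Fin d → Bool, ∑ y : Fin d → Bool,
          (∏ i, if x i = y i then (1 + ρ) / 4 else (1 - ρ) / 4) * (f' x * g' y) := by
  classical
  rw [aux_main d ρ f g hf hg, aux_main d ρ f' g' hf' hg', hbiasf, hbiasg]
  set nn : ℕ → ℝ := fun k =>
    ((Finset.univ.filter fun xy : (Fin d → Bool) × (Fin d → Bool) =>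
        hammingDist xy.1 xy.2 = k ∧ f xy.1 = 1 ∧ g xy.2 = 1).card : ℝ) with hnn
  set nn' : ℕ → ℝ := fun k =>
    ((Finset.univ.filter fun xy : (Fin d → Bool) × (Fin d → Bool) =>
        hammingDist xy.1 xy.2 = k ∧ f' xy.1 = 1 ∧ g' xy.2 = 1).card : ℝ) with hnn'
  have hNle : ∀ ℓ, ℓ ≤ d → (∑ j ∈ Finset.range (ℓ+1), nn j) ≤ ∑ j ∈ Finset.range (ℓ+1), nn' j := by
    intro ℓ hℓ
    have h := hdom ℓ hℓ
    rw [hnn, hnn']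
    push_cast
    exact_mod_cast h
  have key : ∑ k ∈ Finset.range (d+1), nn k * Wt d ρ k
      ≤ ∑ k ∈ Finset.range (d+1), nn' k * Wt d ρ k := by
    have e1 := Finset.sum_range_by_parts (Wt d ρ) nn (d+1)
    have e2 := Finset.sum_range_by_parts (Wt d ρ) nn' (d+1)
    simp only [smul_eq_mul, Nat.add_sub_cancel] at e1 e2
    simp_rw [mul_comm (nn _) (Wt d ρ _), mul_comm (nn' _) (Wt d ρ _)]
    rw [e1, e2]
    apply sub_le_sub
    · exact mul_le_mul_of_nonneg_left (hNle d le_rfl) (Wt_nonneg d ρ hρ0 hρ1 d)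
    · apply Finset.sum_le_sum
      intro i hi
      have hi' : i < d := Finset.mem_range.mp hi
      have hcoef : Wt d ρ (i+1) - Wt d ρ i ≤ 0 :=
        sub_nonpos.mpr (Wt_antitone d ρ hρ0 hρ1 i hi')
      exact mul_le_mul_of_nonpos_left (hNle i hi'.le) hcoef
  linarith [key]
end

section
/- Under the uniform product measure on {-1,1}^d, the bit-flip map preserves measure and hence the projection operator Ξ_k preserves the mean: for any f: {-1,1}^d → {-1,1} and k ∈ [d], E[Ξ_k(f)(X^d)] = E[f(X^d)], where Ξ_k(f)(x^d) = 1 if (x_k = −1 and (f(x^d) = 1 or f(ξ_k(x^d)) = 1)) or (x_k = 1 and f(x^d) = 1 and f(ξ_k(x^d)) = 1), and Ξ_k(f)(x^d) = −1 otherwise, with ξ_k flipping the k-th coordinate. -/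
/-- Under the uniform measure on `{-1,1}^d` (encoded as `Fin d → Bool` with
`false ↔ -1`), the projection operator `Ξ_k` preserves the mean:
`E[Ξ_k(f)(X^d)] = E[f(X^d)]`. -/
theorem stmt_13 (d : ℕ) (k : Fin d) (f : (Fin d → Bool) → ℝ)
    (hf : ∀ x, f x = 1 ∨ f x = -1) :
    ((2 : ℝ) ^ d)⁻¹ * ∑ x : Fin d → Bool,
        (if (x k = false ∧ (f x = 1 ∨ f (Function.update x k (!x k)) = 1)) ∨
            (x k = true ∧ f x = 1 ∧ f (Function.update x k (!x k)) = 1)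
          then (1 : ℝ) else -1)
      = ((2 : ℝ) ^ d)⁻¹ * ∑ x : Fin d → Bool, f x := by
  congr 1
  rw [← sub_eq_zero, ← Finset.sum_sub_distrib]
  apply Finset.sum_ninvolution (g := fun x => Function.update x k (!x k))
  · intro x
    set y := Function.update x k (!x k) with hy
    have hyk : y k = !x k := Function.update_self k (!x k) x
    have hyy : Function.update y k (!y k) = x := by
      rw [hyk, Bool.not_not, hy, Function.update_idem, Function.update_eq_self]
    rw [hyy]
    rcases hf x with h1 | h1 <;> rcases hf y with h2 | h2 <;>
      cases hxk : x k <;>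
      simp [h1, h2, hxk, hyk] <;> norm_num
  · intro x h hc
    apply h
    have : Function.update x k (!x k) k = x k := by rw [hc]
    rw [Function.update_self] at this
    exact absurd this (by cases x k <;> simp)
  · intro x; exact Finset.mem_univ _
  · intro x
    have hyk : Function.update x k (!x k) k = !x k := Function.update_self k (!x k) x
    rw [hyk, Bool.not_not, Function.update_idem, Function.update_eq_self]
end

section
/- In the NISS scenario where two agents share one uniform common random bit Z and have unlimited independent local randomness, the set of simulatable joint distributions of binary outputs (U,V) with P(U=1)=a and P(V=1)=b is exactly the set of Q_{UV} satisfying (2 − ζ − β)/2 ≤ Q(U=V) ≤ (2 − ζ + β)/2, where ζ = 1 − (2a−1)(2b−1) and β = min{2a, 2(1−a)}·min{2b, 2(1−b)}. -/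
set_option maxHeartbeats 1600000


open Filter

/-- Output distribution when each agent applies a function to the shared uniform bit `Z`
and its own `dd` local i.i.d. fair bits (all `2dd+1` bits uniform and independent). -/
noncomputable def outDistCR (dd : ℕ) (f g : Bool × (Fin dd → Bool) → Bool) :
    Bool × Bool → ℝ :=
  fun uv => ((2 : ℝ) ^ (2 * dd + 1))⁻¹ *
    ((Finset.univ.filter fun zxy : Bool × (Fin dd → Bool) × (Fin dd → Bool) =>
      f (zxy.1, zxy.2.1) = uv.1 ∧ g (zxy.1, zxy.2.2) = uv.2).card : ℝ)

/-- Total variation distance on `Bool × Bool`. -/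
noncomputable def dTVCR (μ ν : Bool × Bool → ℝ) : ℝ := ∑ w : Bool × Bool, |μ w - ν w|

/-- `Q` is simulatable with one common uniform bit and unlimited local randomness. -/
noncomputable def SimulatableCR (Q : Bool × Bool → ℝ) : Prop :=
  ∃ f : (dd : ℕ) → Bool × (Fin dd → Bool) → Bool,
  ∃ g : (dd : ℕ) → Bool × (Fin dd → Bool) → Bool,
    Tendsto (fun dd => dTVCR (outDistCR dd (f dd) (g dd)) Q) atTop (nhds 0)

/-! ### Auxiliary machinery -/

lemma card_lt_fin (n k : ℕ) (hk : k ≤ n) :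
    (Finset.univ.filter fun i : Fin n => (i : ℕ) < k).card = k := by
  have : (Finset.univ.filter fun i : Fin n => (i : ℕ) < k) =
      (Finset.range k).attachFin (fun m hm => lt_of_lt_of_le (Finset.mem_range.mp hm) hk) := by
    ext i
    simp [Finset.mem_attachFin]
  rw [this, Finset.card_attachFin, Finset.card_range]

noncomputable def boolEnc (dd : ℕ) : (Fin dd → Bool) ≃ Fin (2 ^ dd) :=
  (Equiv.arrowCongr (Equiv.refl _) finTwoEquiv.symm).trans finFunctionFinEquiv

lemma card_thr (dd k : ℕ) (hk : k ≤ 2 ^ dd) :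
    (Finset.univ.filter fun x : Fin dd → Bool => ((boolEnc dd x : ℕ) < k)).card = k := by
  have h : (Finset.univ.filter fun x : Fin dd → Bool => ((boolEnc dd x : ℕ) < k)).card =
      (Finset.univ.filter fun i : Fin (2^dd) => (i : ℕ) < k).card := by
    apply Finset.card_nbij (fun x => boolEnc dd x)
    · intro x hx; simpa using (Finset.mem_filter.mp hx).2
    · intro x hx y hy hxy; exact (boolEnc dd).injective hxy
    · intro i hi
      refine ⟨(boolEnc dd).symm i, ?_, by simp⟩
      simp at hi ⊢; simpa using hi
  rw [h, card_lt_fin (2^dd) k hk]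

noncomputable def prbCR (dd : ℕ) (f : Bool × (Fin dd → Bool) → Bool) (z u : Bool) : ℝ :=
  ((Finset.univ.filter fun x : Fin dd → Bool => f (z, x) = u).card : ℝ) / 2 ^ dd

lemma prb_nonneg (dd : ℕ) (f : Bool × (Fin dd → Bool) → Bool) (z u : Bool) :
    0 ≤ prbCR dd f z u := by
  unfold prbCR; positivity

lemma prb_add (dd : ℕ) (f : Bool × (Fin dd → Bool) → Bool) (z : Bool) :
    prbCR dd f z true + prbCR dd f z false = 1 := by
  unfold prbCR
  rw [← add_div, div_eq_one_iff_eq (by positivity)]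
  rw [← Nat.cast_add]
  norm_cast
  have h2 : (Finset.univ.filter fun x : Fin dd → Bool => f (z, x) = false)
      = (Finset.univ.filter fun x : Fin dd → Bool => ¬ (f (z, x) = true)) := by
    apply Finset.filter_congr; intro x _; simp
  rw [h2, Finset.card_filter_add_card_filter_not, Finset.card_univ]
  simp

lemma prb_le_one (dd : ℕ) (f : Bool × (Fin dd → Bool) → Bool) (z u : Bool) :
    prbCR dd f z u ≤ 1 := by
  have h := prb_add dd f z
  cases u
  · linarith [prb_nonneg dd f z true]
  · linarith [prb_nonneg dd f z false]

lemma card_factor (dd : ℕ) (f g : Bool × (Fin dd → Bool) → Bool) (u v : Bool) :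
    ((Finset.univ.filter fun zxy : Bool × (Fin dd → Bool) × (Fin dd → Bool) =>
      f (zxy.1, zxy.2.1) = u ∧ g (zxy.1, zxy.2.2) = v).card : ℕ)
    = ∑ z : Bool, (Finset.univ.filter fun x : Fin dd → Bool => f (z, x) = u).card *
        (Finset.univ.filter fun y : Fin dd → Bool => g (z, y) = v).card := by
  rw [Finset.card_filter]
  rw [Fintype.sum_prod_type]
  refine Finset.sum_congr rfl fun z _ => ?_
  rw [Fintype.sum_prod_type, Finset.card_filter, Finset.card_filter, Finset.sum_mul_sum]
  refine Finset.sum_congr rfl fun x _ => Finset.sum_congr rfl fun y _ => ?_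
  by_cases h1 : f (z, x) = u <;> by_cases h2 : g (z, y) = v <;> simp [h1, h2]

lemma outDist_eq (dd : ℕ) (f g : Bool × (Fin dd → Bool) → Bool) (uv : Bool × Bool) :
    outDistCR dd f g uv =
      (prbCR dd f true uv.1 * prbCR dd g true uv.2
        + prbCR dd f false uv.1 * prbCR dd g false uv.2) / 2 := by
  unfold outDistCR prbCR
  rw [card_factor]
  simp only [Fintype.sum_bool]
  push_cast
  have hp : ((2:ℝ) ^ (2 * dd + 1)) = (2 ^ dd * 2 ^ dd) * 2 := by
    rw [pow_succ, two_mul, pow_add]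
  rw [hp]
  have h2 : ((2:ℝ) ^ dd) ≠ 0 := by positivity
  field_simp

lemma abs_sub_le_two_sub (x y : ℝ) (hx : |x| ≤ 1) (hy : |y| ≤ 1) :
    |x - y| ≤ 2 - |x + y| := by
  rw [abs_le] at hx hy
  rcases abs_cases (x - y) with ⟨h1, _⟩ | ⟨h1, _⟩ <;>
    rcases abs_cases (x + y) with ⟨h2, _⟩ | ⟨h2, _⟩ <;> linarith

lemma min_eq_abs (a : ℝ) : min (2 * a) (2 * (1 - a)) = 1 - |2 * a - 1| := by
  rcases abs_cases (2 * a - 1) with ⟨h1, h2⟩ | ⟨h1, h2⟩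
  · rw [h1, min_eq_right (by linarith)]; ring
  · rw [h1, min_eq_left (by linarith)]; ring

lemma dist_bound (p1 p2 q1 q2 : ℝ)
    (hp1 : 0 ≤ p1) (hp1' : p1 ≤ 1) (hp2 : 0 ≤ p2) (hp2' : p2 ≤ 1)
    (hq1 : 0 ≤ q1) (hq1' : q1 ≤ 1) (hq2 : 0 ≤ q2) (hq2' : q2 ≤ 1)
    (aa bb : ℝ) (haa : aa = (p1 + p2) / 2) (hbb : bb = (q1 + q2) / 2) :
    |(p1 * q1 + p2 * q2 + (1 - p1) * (1 - q1) + (1 - p2) * (1 - q2)) / 2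
      - (1 + (2 * aa - 1) * (2 * bb - 1)) / 2|
      ≤ (1 - |2 * aa - 1|) * (1 - |2 * bb - 1|) / 2 := by
  set u1 := 2 * p1 - 1 with hu1
  set u2 := 2 * p2 - 1 with hu2
  set v1 := 2 * q1 - 1 with hv1
  set v2 := 2 * q2 - 1 with hv2
  have hu : |u1 - u2| ≤ 2 - |u1 + u2| :=
    abs_sub_le_two_sub _ _ (abs_le.mpr ⟨by linarith, by linarith⟩)
      (abs_le.mpr ⟨by linarith, by linarith⟩)
  have hv : |v1 - v2| ≤ 2 - |v1 + v2| :=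
    abs_sub_le_two_sub _ _ (abs_le.mpr ⟨by linarith, by linarith⟩)
      (abs_le.mpr ⟨by linarith, by linarith⟩)
  have hA : 2 * aa - 1 = (u1 + u2) / 2 := by rw [haa]; ring
  have hB : 2 * bb - 1 = (v1 + v2) / 2 := by rw [hbb]; ring
  have hLHS : (p1 * q1 + p2 * q2 + (1 - p1) * (1 - q1) + (1 - p2) * (1 - q2)) / 2
      - (1 + (2 * aa - 1) * (2 * bb - 1)) / 2 = (u1 - u2) * (v1 - v2) / 8 := by
    rw [hA, hB, hu1, hu2, hv1, hv2]; ring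
  rw [hLHS, hA, hB]
  have h8 : |(u1 - u2) * (v1 - v2) / 8| = |u1 - u2| * |v1 - v2| / 8 := by
    rw [abs_div, abs_mul]; norm_num
  rw [h8]
  have habs1 : |(u1 + u2) / 2| = |u1 + u2| / 2 := by rw [abs_div]; norm_num
  have habs2 : |(v1 + v2) / 2| = |v1 + v2| / 2 := by rw [abs_div]; norm_num
  rw [habs1, habs2]
  have h1 : |u1 - u2| * |v1 - v2| ≤ (2 - |u1 + u2|) * (2 - |v1 + v2|) :=
    mul_le_mul hu hv (abs_nonneg _) (le_trans (abs_nonneg _) hu)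
  nlinarith [abs_nonneg (u1 + u2), abs_nonneg (v1 + v2)]

lemma exists_pq (s t r : ℝ) (hs : |s| ≤ 1) (ht : |t| ≤ 1)
    (hr : |r| ≤ (1 - |s|) * (1 - |t|) / 2) :
    ∃ p1 p2 q1 q2 : ℝ, 0 ≤ p1 ∧ p1 ≤ 1 ∧ 0 ≤ p2 ∧ p2 ≤ 1 ∧
      0 ≤ q1 ∧ q1 ≤ 1 ∧ 0 ≤ q2 ∧ q2 ≤ 1 ∧
      (p1 + p2) / 2 = (1 + s) / 2 ∧ (q1 + q2) / 2 = (1 + t) / 2 ∧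
      (p1 * q1 + p2 * q2) / 2 = (1 + s) * (1 + t) / 4 + r / 2 := by
  have hs0 : 0 ≤ 1 - |s| := by linarith
  have ht0 : 0 ≤ 1 - |t| := by linarith
  set du : ℝ := 2 * (1 - |s|) with hdu
  set dv : ℝ := 4 * r / (1 - |s|) with hdv
  have hdudv : du * dv = 8 * r := by
    by_cases h : (1 : ℝ) - |s| = 0
    · have hr0 : r = 0 := by
        have h2 : |r| ≤ 0 := by rw [h] at hr; linarith
        exact abs_eq_zero.mp (le_antisymm h2 (abs_nonneg r))
      rw [hdv, hr0, h]; simp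
    · rw [hdu, hdv]; field_simp; ring
  have hdvle : |dv| ≤ 2 * (1 - |t|) := by
    by_cases h : (1 : ℝ) - |s| = 0
    · have hr0 : r = 0 := by
        have h2 : |r| ≤ 0 := by rw [h] at hr; linarith
        exact abs_eq_zero.mp (le_antisymm h2 (abs_nonneg r))
      rw [hdv, hr0]; simp; linarith
    · have hpos : 0 < 1 - |s| := lt_of_le_of_ne hs0 (Ne.symm h)
      rw [hdv, abs_div, abs_of_pos hpos, div_le_iff₀ hpos]
      have : |4 * r| = 4 * |r| := by rw [abs_mul]; norm_num
      rw [this]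
      nlinarith
  have hdv2 : -(1 - |t|) / 2 ≤ dv / 4 ∧ dv / 4 ≤ (1 - |t|) / 2 := by
    rw [abs_le] at hdvle
    constructor <;> linarith [hdvle.1, hdvle.2]
  refine ⟨(1 + s) / 2 + du / 4, (1 + s) / 2 - du / 4,
    (1 + t) / 2 + dv / 4, (1 + t) / 2 - dv / 4, ?_, ?_, ?_, ?_, ?_, ?_, ?_, ?_, ?_, ?_, ?_⟩
  · rcases abs_cases s with ⟨h1, _⟩ | ⟨h1, _⟩ <;> rw [hdu, h1] <;> linarith
  · rcases abs_cases s with ⟨h1, _⟩ | ⟨h1, _⟩ <;> rw [hdu, h1] <;> linarith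
  · rcases abs_cases s with ⟨h1, _⟩ | ⟨h1, _⟩ <;> rw [hdu, h1] <;> linarith
  · rcases abs_cases s with ⟨h1, _⟩ | ⟨h1, _⟩ <;> rw [hdu, h1] <;> linarith
  · rcases abs_cases t with ⟨h1, _⟩ | ⟨h1, _⟩ <;> rw [h1] at hdv2 <;>
      linarith [hdv2.1, hdv2.2]
  · rcases abs_cases t with ⟨h1, _⟩ | ⟨h1, _⟩ <;> rw [h1] at hdv2 <;>
      linarith [hdv2.1, hdv2.2]
  · rcases abs_cases t with ⟨h1, _⟩ | ⟨h1, _⟩ <;> rw [h1] at hdv2 <;>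
      linarith [hdv2.1, hdv2.2]
  · rcases abs_cases t with ⟨h1, _⟩ | ⟨h1, _⟩ <;> rw [h1] at hdv2 <;>
      linarith [hdv2.1, hdv2.2]
  · ring
  · ring
  · linear_combination hdudv / 16

/-- Threshold function realizing probability `⌊h z * 2^dd⌋ / 2^dd` given the common bit `z`. -/
noncomputable def thrFun (h : Bool → ℝ) (dd : ℕ) : Bool × (Fin dd → Bool) → Bool :=
  fun zx => decide ((boolEnc dd zx.2 : ℕ) < Nat.floor (h zx.1 * 2 ^ dd))

lemma prb_thr (dd : ℕ) (h : Bool → ℝ) (h0 : ∀ z, 0 ≤ h z) (h1 : ∀ z, h z ≤ 1) (z : Bool) :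
    prbCR dd (thrFun h dd) z true = (Nat.floor (h z * 2 ^ dd) : ℝ) / 2 ^ dd := by
  unfold prbCR thrFun
  congr 1
  have hk : Nat.floor (h z * 2 ^ dd) ≤ 2 ^ dd := by
    have hle : h z * 2 ^ dd ≤ (2 ^ dd : ℝ) := by
      nlinarith [h1 z, h0 z, pow_pos (show (0:ℝ) < 2 by norm_num) dd]
    have h2 : (Nat.floor (h z * 2 ^ dd) : ℝ) ≤ (2 ^ dd : ℝ) :=
      le_trans (Nat.floor_le (mul_nonneg (h0 z) (by positivity))) hle
    exact_mod_cast h2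
  have hfil : (Finset.univ.filter fun x : Fin dd → Bool =>
      (decide ((boolEnc dd x : ℕ) < Nat.floor (h z * 2 ^ dd))) = true)
      = (Finset.univ.filter fun x : Fin dd → Bool =>
        ((boolEnc dd x : ℕ) < Nat.floor (h z * 2 ^ dd))) := by
    apply Finset.filter_congr; intro x _; simp
  rw [hfil, card_thr dd _ hk]

lemma prb_thr_err (dd : ℕ) (h : Bool → ℝ) (h0 : ∀ z, 0 ≤ h z) (h1 : ∀ z, h z ≤ 1) (z : Bool) :
    |prbCR dd (thrFun h dd) z true - h z| ≤ (1 / 2) ^ dd := by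
  rw [prb_thr dd h h0 h1 z]
  have hp2 : (0:ℝ) < 2 ^ dd := by positivity
  have hf1 : ((Nat.floor (h z * 2 ^ dd) : ℝ)) ≤ h z * 2 ^ dd :=
    Nat.floor_le (mul_nonneg (h0 z) (by positivity))
  have hf2 : h z * 2 ^ dd < (Nat.floor (h z * 2 ^ dd) : ℝ) + 1 :=
    Nat.lt_floor_add_one _
  have key : ((Nat.floor (h z * 2 ^ dd) : ℝ)) / 2 ^ dd - h z
      = ((Nat.floor (h z * 2 ^ dd) : ℝ) - h z * 2 ^ dd) / 2 ^ dd := by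
    field_simp
  rw [key, abs_div, abs_of_pos hp2, div_pow, one_pow, div_le_div_iff₀ hp2 hp2]
  rcases abs_cases ((Nat.floor (h z * 2 ^ dd) : ℝ) - h z * 2 ^ dd) with ⟨he, _⟩ | ⟨he, _⟩ <;>
    rw [he] <;> nlinarith

lemma err4 (x1 x2 y1 y2 a1 a2 b1 b2 ε : ℝ)
    (hx1 : |x1 - a1| ≤ ε) (hx2 : |x2 - a2| ≤ ε) (hy1 : |y1 - b1| ≤ ε) (hy2 : |y2 - b2| ≤ ε)
    (hx1b : |x1| ≤ 1) (hx2b : |x2| ≤ 1) (hb1 : |b1| ≤ 1) (hb2 : |b2| ≤ 1) :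
    |(x1 * y1 + x2 * y2) / 2 - (a1 * b1 + a2 * b2) / 2| ≤ 2 * ε := by
  have e1 : |x1 * y1 - a1 * b1| ≤ 2 * ε := by
    have hd : x1 * y1 - a1 * b1 = x1 * (y1 - b1) + (x1 - a1) * b1 := by ring
    rw [hd]
    refine (abs_add_le _ _).trans ?_
    rw [abs_mul, abs_mul]
    have e11 : |x1| * |y1 - b1| ≤ 1 * ε :=
      mul_le_mul hx1b hy1 (abs_nonneg _) (by norm_num)
    have e12 : |x1 - a1| * |b1| ≤ ε * 1 :=
      mul_le_mul hx1 hb1 (abs_nonneg _) (le_trans (abs_nonneg _) hx1)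
    linarith
  have e2 : |x2 * y2 - a2 * b2| ≤ 2 * ε := by
    have hd : x2 * y2 - a2 * b2 = x2 * (y2 - b2) + (x2 - a2) * b2 := by ring
    rw [hd]
    refine (abs_add_le _ _).trans ?_
    rw [abs_mul, abs_mul]
    have e11 : |x2| * |y2 - b2| ≤ 1 * ε :=
      mul_le_mul hx2b hy2 (abs_nonneg _) (by norm_num)
    have e12 : |x2 - a2| * |b2| ≤ ε * 1 :=
      mul_le_mul hx2 hb2 (abs_nonneg _) (le_trans (abs_nonneg _) hx2)
    linarith
  have hd : (x1 * y1 + x2 * y2) / 2 - (a1 * b1 + a2 * b2) / 2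
      = ((x1 * y1 - a1 * b1) + (x2 * y2 - a2 * b2)) / 2 := by ring
  rw [hd, abs_div, abs_of_pos (show (0:ℝ) < 2 by norm_num)]
  have := (abs_add_le (x1 * y1 - a1 * b1) (x2 * y2 - a2 * b2))
  linarith

/-- With one shared uniform bit and unlimited local randomness, a binary-output
joint distribution `Q` with marginals `P(U=1)=a`, `P(V=1)=b` is simulatable iff
`(2−ζ−β)/2 ≤ Q(U=V) ≤ (2−ζ+β)/2`, where `ζ = 1−(2a−1)(2b−1)` and
`β = min{2a,2(1−a)}·min{2b,2(1−b)}`. -/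
theorem stmt_14 (Q : Bool × Bool → ℝ) (hpos : ∀ z, 0 ≤ Q z)
    (h1 : ∑ z : Bool × Bool, Q z = 1)
    (a b : ℝ) (ha : Q (true, true) + Q (true, false) = a)
    (hb : Q (true, true) + Q (false, true) = b) :
    SimulatableCR Q ↔
      ((2 - (1 - (2 * a - 1) * (2 * b - 1))
            - min (2 * a) (2 * (1 - a)) * min (2 * b) (2 * (1 - b))) / 2
          ≤ Q (true, true) + Q (false, false) ∧
        Q (true, true) + Q (false, false)
          ≤ (2 - (1 - (2 * a - 1) * (2 * b - 1))
            + min (2 * a) (2 * (1 - a)) * min (2 * b) (2 * (1 - b))) / 2) := by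
  have hsum : Q (true, true) + Q (true, false) + Q (false, true) + Q (false, false) = 1 := by
    rw [← h1, Fintype.sum_prod_type]
    simp [Fintype.sum_bool]
    ring
  rw [min_eq_abs a, min_eq_abs b]
  constructor
  · rintro ⟨f, g, hT⟩
    -- pointwise convergence
    have hw : ∀ w : Bool × Bool,
        Tendsto (fun d => outDistCR d (f d) (g d) w) atTop (nhds (Q w)) := by
      intro w
      have hbd : ∀ d, ‖outDistCR d (f d) (g d) w - Q w‖
          ≤ dTVCR (outDistCR d (f d) (g d)) Q := by
        intro d
        rw [Real.norm_eq_abs]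
        unfold dTVCR
        exact Finset.single_le_sum (f := fun w => |outDistCR d (f d) (g d) w - Q w|)
          (fun w _ => abs_nonneg _) (Finset.mem_univ w)
      have h0 : Tendsto (fun d => outDistCR d (f d) (g d) w - Q w) atTop (nhds 0) :=
        squeeze_zero_norm hbd hT
      have := h0.add_const (Q w)
      simpa using this
    set A : ℕ → ℝ := fun d => outDistCR d (f d) (g d) (true, true)
      + outDistCR d (f d) (g d) (true, false) with hAdef
    set B : ℕ → ℝ := fun d => outDistCR d (f d) (g d) (true, true)
      + outDistCR d (f d) (g d) (false, true) with hBdef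
    set M : ℕ → ℝ := fun d => outDistCR d (f d) (g d) (true, true)
      + outDistCR d (f d) (g d) (false, false) with hMdef
    have hAt : Tendsto A atTop (nhds a) := by
      rw [← ha]; exact (hw (true, true)).add (hw (true, false))
    have hBt : Tendsto B atTop (nhds b) := by
      rw [← hb]; exact (hw (true, true)).add (hw (false, true))
    have hMt : Tendsto M atTop (nhds (Q (true, true) + Q (false, false))) :=
      (hw (true, true)).add (hw (false, false))
    -- per-d inequality
    have hper : ∀ d, |M d - (1 + (2 * A d - 1) * (2 * B d - 1)) / 2|
        ≤ (1 - |2 * A d - 1|) * (1 - |2 * B d - 1|) / 2 := by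
      intro d
      have ef1 : prbCR d (f d) true false = 1 - prbCR d (f d) true true := by
        have := prb_add d (f d) true; linarith
      have ef2 : prbCR d (f d) false false = 1 - prbCR d (f d) false true := by
        have := prb_add d (f d) false; linarith
      have eg1 : prbCR d (g d) true false = 1 - prbCR d (g d) true true := by
        have := prb_add d (g d) true; linarith
      have eg2 : prbCR d (g d) false false = 1 - prbCR d (g d) false true := by
        have := prb_add d (g d) false; linarith
      have hA' : A d = (prbCR d (f d) true true + prbCR d (f d) false true) / 2 := by
        simp only [hAdef, outDist_eq, ef1, ef2, eg1, eg2]; ring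
      have hB' : B d = (prbCR d (g d) true true + prbCR d (g d) false true) / 2 := by
        simp only [hBdef, outDist_eq, ef1, ef2, eg1, eg2]; ring
      have hM' : M d = (prbCR d (f d) true true * prbCR d (g d) true true
          + prbCR d (f d) false true * prbCR d (g d) false true
          + (1 - prbCR d (f d) true true) * (1 - prbCR d (g d) true true)
          + (1 - prbCR d (f d) false true) * (1 - prbCR d (g d) false true)) / 2 := by
        simp only [hMdef, outDist_eq, ef1, ef2, eg1, eg2]; ring
      rw [hA', hB', hM']
      exact dist_bound _ _ _ _ (prb_nonneg _ _ _ _) (prb_le_one _ _ _ _)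
        (prb_nonneg _ _ _ _) (prb_le_one _ _ _ _) (prb_nonneg _ _ _ _) (prb_le_one _ _ _ _)
        (prb_nonneg _ _ _ _) (prb_le_one _ _ _ _) _ _ rfl rfl
    have hLt : Tendsto (fun d => |M d - (1 + (2 * A d - 1) * (2 * B d - 1)) / 2|) atTop
        (nhds (|Q (true, true) + Q (false, false) - (1 + (2 * a - 1) * (2 * b - 1)) / 2|)) := by
      have h1' : Tendsto (fun d => 2 * A d - 1) atTop (nhds (2 * a - 1)) :=
        (hAt.const_mul 2).sub_const 1
      have h2' : Tendsto (fun d => 2 * B d - 1) atTop (nhds (2 * b - 1)) :=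
        (hBt.const_mul 2).sub_const 1
      exact (hMt.sub (((h1'.mul h2').const_add 1).div_const 2)).abs
    have hRt : Tendsto (fun d => (1 - |2 * A d - 1|) * (1 - |2 * B d - 1|) / 2) atTop
        (nhds ((1 - |2 * a - 1|) * (1 - |2 * b - 1|) / 2)) := by
      have h1' : Tendsto (fun d => 2 * A d - 1) atTop (nhds (2 * a - 1)) :=
        (hAt.const_mul 2).sub_const 1
      have h2' : Tendsto (fun d => 2 * B d - 1) atTop (nhds (2 * b - 1)) :=
        (hBt.const_mul 2).sub_const 1
      exact ((h1'.abs.const_sub 1).mul (h2'.abs.const_sub 1)).div_const 2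
    have hfin := le_of_tendsto_of_tendsto' hLt hRt hper
    rw [abs_le] at hfin
    constructor <;> linarith [hfin.1, hfin.2]
  · rintro ⟨hlo, hhi⟩
    set s : ℝ := 2 * a - 1 with hsdef
    set t : ℝ := 2 * b - 1 with htdef
    set r : ℝ := (Q (true, true) + Q (false, false)) - (1 + s * t) / 2 with hrdef
    have hs : |s| ≤ 1 := by
      rw [abs_le]
      constructor <;>
        · rw [hsdef]
          have h1' := hpos (true, true); have h2' := hpos (true, false)
          have h3' := hpos (false, true); have h4' := hpos (false, false)
          linarith
    have ht : |t| ≤ 1 := by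
      rw [abs_le]
      constructor <;>
        · rw [htdef]
          have h1' := hpos (true, true); have h2' := hpos (true, false)
          have h3' := hpos (false, true); have h4' := hpos (false, false)
          linarith
    have hr : |r| ≤ (1 - |s|) * (1 - |t|) / 2 := by
      rw [abs_le]
      constructor <;> [linarith [hlo]; linarith [hhi]]
    obtain ⟨p1, p2, q1, q2, hp10, hp11, hp20, hp21, hq10, hq11, hq20, hq21, e1, e2, e3⟩ :=
      exists_pq s t r hs ht hr
    -- the four target identities
    have hQtt : Q (true, true) = (p1 * q1 + p2 * q2) / 2 := by
      rw [e3, hrdef, hsdef, htdef]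
      nlinarith [hsum, ha, hb]
    have hQtf : Q (true, false) = (p1 * (1 - q1) + p2 * (1 - q2)) / 2 := by
      have hexp : (p1 * (1 - q1) + p2 * (1 - q2)) / 2
          = (p1 + p2) / 2 - (p1 * q1 + p2 * q2) / 2 := by ring
      rw [hexp, e1, ← hQtt]
      rw [hsdef]; linarith
    have hQft : Q (false, true) = ((1 - p1) * q1 + (1 - p2) * q2) / 2 := by
      have hexp : ((1 - p1) * q1 + (1 - p2) * q2) / 2
          = (q1 + q2) / 2 - (p1 * q1 + p2 * q2) / 2 := by ring
      rw [hexp, e2, ← hQtt]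
      rw [htdef]; linarith
    have hQff : Q (false, false) = ((1 - p1) * (1 - q1) + (1 - p2) * (1 - q2)) / 2 := by
      have hexp : ((1 - p1) * (1 - q1) + (1 - p2) * (1 - q2)) / 2
          = 1 - (p1 + p2) / 2 - (q1 + q2) / 2 + (p1 * q1 + p2 * q2) / 2 := by ring
      rw [hexp, e1, e2, ← hQtt]
      rw [hsdef, htdef]; linarith
    -- build the simulating functions
    refine ⟨fun d => thrFun (fun z => cond z p1 p2) d,
      fun d => thrFun (fun z => cond z q1 q2) d, ?_⟩
    have hfb0 : ∀ z : Bool, (0:ℝ) ≤ cond z p1 p2 := by intro z; cases z <;> simpa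
    have hfb1 : ∀ z : Bool, (cond z p1 p2 : ℝ) ≤ 1 := by intro z; cases z <;> simpa
    have hgb0 : ∀ z : Bool, (0:ℝ) ≤ cond z q1 q2 := by intro z; cases z <;> simpa
    have hgb1 : ∀ z : Bool, (cond z q1 q2 : ℝ) ≤ 1 := by intro z; cases z <;> simpa
    have hTVb : ∀ d, dTVCR (outDistCR d (thrFun (fun z => cond z p1 p2) d)
        (thrFun (fun z => cond z q1 q2) d)) Q ≤ 8 * (1 / 2) ^ d := by
      intro d
      set ε : ℝ := (1 / 2) ^ d with hε
      set F := thrFun (fun z => cond z p1 p2) d with hF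
      set G := thrFun (fun z => cond z q1 q2) d with hG
      have hx1 : |prbCR d F true true - p1| ≤ ε := by
        have h := prb_thr_err d (fun z => cond z p1 p2) hfb0 hfb1 true
        rw [hε]; exact h
      have hx2 : |prbCR d F false true - p2| ≤ ε := by
        have h := prb_thr_err d (fun z => cond z p1 p2) hfb0 hfb1 false
        rw [hε]; exact h
      have hy1 : |prbCR d G true true - q1| ≤ ε := by
        have h := prb_thr_err d (fun z => cond z q1 q2) hgb0 hgb1 true
        rw [hε]; exact h
      have hy2 : |prbCR d G false true - q2| ≤ ε := by
        have h := prb_thr_err d (fun z => cond z q1 q2) hgb0 hgb1 false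
        rw [hε]; exact h
      have ex1 : prbCR d F true false = 1 - prbCR d F true true := by
        have := prb_add d F true; linarith
      have ex2 : prbCR d F false false = 1 - prbCR d F false true := by
        have := prb_add d F false; linarith
      have ey1 : prbCR d G true false = 1 - prbCR d G true true := by
        have := prb_add d G true; linarith
      have ey2 : prbCR d G false false = 1 - prbCR d G false true := by
        have := prb_add d G false; linarith
      have hx1' : |(1 - prbCR d F true true) - (1 - p1)| ≤ ε := by
        rw [show (1 - prbCR d F true true) - (1 - p1) = -(prbCR d F true true - p1) by ring,
          abs_neg]; exact hx1
      have hx2' : |(1 - prbCR d F false true) - (1 - p2)| ≤ ε := by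
        rw [show (1 - prbCR d F false true) - (1 - p2) = -(prbCR d F false true - p2) by ring,
          abs_neg]; exact hx2
      have hy1' : |(1 - prbCR d G true true) - (1 - q1)| ≤ ε := by
        rw [show (1 - prbCR d G true true) - (1 - q1) = -(prbCR d G true true - q1) by ring,
          abs_neg]; exact hy1
      have hy2' : |(1 - prbCR d G false true) - (1 - q2)| ≤ ε := by
        rw [show (1 - prbCR d G false true) - (1 - q2) = -(prbCR d G false true - q2) by ring,
          abs_neg]; exact hy2
      have habs : ∀ (x : ℝ), 0 ≤ x → x ≤ 1 → |x| ≤ 1 := by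
        intro x h0 h1'; rw [abs_of_nonneg h0]; exact h1'
      have hxb : ∀ z u, |prbCR d F z u| ≤ 1 :=
        fun z u => habs _ (prb_nonneg _ _ _ _) (prb_le_one _ _ _ _)
      have hxb' : ∀ z u, |1 - prbCR d F z u| ≤ 1 := by
        intro z u; exact habs _ (by linarith [prb_le_one d F z u]) (by linarith [prb_nonneg d F z u])
      -- bounds for the target probabilities
      have hq1b : |q1| ≤ 1 := habs _ hq10 hq11
      have hq2b : |q2| ≤ 1 := habs _ hq20 hq21
      have hq1b' : |1 - q1| ≤ 1 := habs _ (by linarith) (by linarith)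
      have hq2b' : |1 - q2| ≤ 1 := habs _ (by linarith) (by linarith)
      -- per-entry errors
      have entt : |outDistCR d F G (true, true) - Q (true, true)| ≤ 2 * ε := by
        rw [outDist_eq, hQtt]
        exact err4 _ _ _ _ _ _ _ _ _ hx1 hx2 hy1 hy2 (hxb _ _) (hxb _ _) hq1b hq2b
      have entf : |outDistCR d F G (true, false) - Q (true, false)| ≤ 2 * ε := by
        rw [outDist_eq, hQtf]
        simp only [ey1, ey2]
        exact err4 _ _ _ _ _ _ _ _ _ hx1 hx2 hy1' hy2' (hxb _ _) (hxb _ _) hq1b' hq2b'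
      have enft : |outDistCR d F G (false, true) - Q (false, true)| ≤ 2 * ε := by
        rw [outDist_eq, hQft]
        simp only [ex1, ex2]
        exact err4 _ _ _ _ _ _ _ _ _ hx1' hx2' hy1 hy2 (hxb' _ _) (hxb' _ _) hq1b hq2b
      have enff : |outDistCR d F G (false, false) - Q (false, false)| ≤ 2 * ε := by
        rw [outDist_eq, hQff]
        simp only [ex1, ex2, ey1, ey2]
        exact err4 _ _ _ _ _ _ _ _ _ hx1' hx2' hy1' hy2' (hxb' _ _) (hxb' _ _) hq1b' hq2b'
      unfold dTVCR
      rw [Fintype.sum_prod_type]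
      simp only [Fintype.sum_bool]
      linarith
    have hTV0 : ∀ d, 0 ≤ dTVCR (outDistCR d (thrFun (fun z => cond z p1 p2) d)
        (thrFun (fun z => cond z q1 q2) d)) Q := by
      intro d; unfold dTVCR; exact Finset.sum_nonneg fun w _ => abs_nonneg _
    have hlim : Tendsto (fun d : ℕ => 8 * (1 / 2 : ℝ) ^ d) atTop (nhds 0) := by
      have := tendsto_pow_atTop_nhds_zero_of_lt_one
        (show (0:ℝ) ≤ 1 / 2 by norm_num) (show (1/2 : ℝ) < 1 by norm_num)
      have h8 := this.const_mul (8:ℝ)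
      simpa using h8
    exact squeeze_zero hTV0 hTVb hlim
end
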